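/- arXiv:1711.05452 — 7 statements merged into one kernel-verified Lean document; each statement's English description precedes it below -/
import Mathlib

section
/- Let (K, φ) be a topological dynamical system and let q : K → L be a projection onto its maximal trivial factor. Then the Koopman operator T_φ is mean ergodic on C(K) if and only if for every l ∈ L and every f ∈ C(K) there exists a constant c_l ∈ ℂ such that the Cesàro averages A_n f(x) = (1/n) Σ_{k=0}^{n-1} f(φ^k(x)) converge to c_l for every x ∈ K_l. -/
set_option maxHeartbeats 1000000
set_option linter.unusedSectionVars false

open Filter Finset

namespace MEproof

variable {X : Type*} [TopologicalSpace X]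

/-- Unnormalized Birkhoff sum. -/
noncomputable def birk (φ : X → X) (h : X → ℝ) (n : ℕ) (x : X) : ℝ :=
  ∑ k ∈ Finset.range n, h (φ^[k] x)

lemma birk_add (φ : X → X) (h : X → ℝ) (m n : ℕ) (x : X) :
    birk φ h (m + n) x = birk φ h m x + birk φ h n (φ^[m] x) := by
  unfold birk
  rw [Finset.sum_range_add]
  congr 1
  refine Finset.sum_congr rfl fun k _ => ?_
  rw [← Function.iterate_add_apply, Nat.add_comm]

lemma birk_continuous {φ : X → X} {h : X → ℝ} (hφ : Continuous φ) (hh : Continuous h) (n : ℕ) :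
    Continuous (birk φ h n) := by
  exact continuous_finset_sum _ fun k _ => hh.comp (hφ.iterate k)

lemma iterate_memC {φ : X → X} {C : Set X} (hinv : Set.MapsTo φ C C) {x : X} (hx : x ∈ C) (k : ℕ) :
    φ^[k] x ∈ C := by
  induction k with
  | zero => simpa using hx
  | succ n ih => rw [Function.iterate_succ_apply']; exact hinv ih

lemma abs_birk_le {φ : X → X} {h : X → ℝ} {C : Set X} (hinv : Set.MapsTo φ C C) {M : ℝ}
    (hM : ∀ x ∈ C, |h x| ≤ M) {x : X} (hx : x ∈ C) (n : ℕ) :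
    |birk φ h n x| ≤ n * M := by
  calc |birk φ h n x| ≤ ∑ k ∈ Finset.range n, |h (φ^[k] x)| := Finset.abs_sum_le_sum_abs _ _
    _ ≤ ∑ k ∈ Finset.range n, M := Finset.sum_le_sum fun k _ => hM _ (iterate_memC hinv hx k)
    _ = n * M := by simp [Finset.sum_const, mul_comm]

/-- shifted telescoping identity -/
lemma sum_shift (u : ℕ → ℝ) (N m : ℕ) :
    ∑ k ∈ Finset.range N, (u (k + m) - u k) = ∑ j ∈ Finset.range m, (u (N + j) - u j) := by
  induction m with
  | zero => simp
  | succ m ih =>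
    have key : ∑ k ∈ Finset.range N, (u (k + (m+1)) - u k)
        = (∑ k ∈ Finset.range N, (u (k + m) - u k))
          + ∑ k ∈ Finset.range N, (u ((k + 1) + m) - u (k + m)) := by
      rw [← Finset.sum_add_distrib]
      refine Finset.sum_congr rfl fun k _ => ?_
      have : k + (m + 1) = k + 1 + m := by omega
      rw [this]; ring
    rw [key, ih, Finset.sum_range_sub (fun k => u (k + m)) N, Finset.sum_range_succ]
    simp


section Sup

variable {φ : X → X} {h : X → ℝ} {C : Set X}

lemma birk_avg_close (hinv : Set.MapsTo φ C C)
    {M : ℝ} (hM0 : 0 ≤ M) (hM : ∀ x ∈ C, |h x| ≤ M) {n₀ : ℕ} (hn₀ : 0 < n₀)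
    {x : X} (hx : x ∈ C) (N : ℕ) :
    |birk φ (fun y => ((n₀ : ℝ))⁻¹ * birk φ h n₀ y) N x - birk φ h N x| ≤ 2 * n₀ * M := by
  have hn₀R : (0:ℝ) < n₀ := by exact_mod_cast hn₀
  set u : ℕ → ℝ := fun k => birk φ h k x with hu
  have h1 : birk φ (fun y => ((n₀ : ℝ))⁻¹ * birk φ h n₀ y) N x
      = (n₀:ℝ)⁻¹ * ∑ k ∈ Finset.range N, (u (k + n₀) - u k) := by
    show (∑ k ∈ Finset.range N, ((n₀:ℝ))⁻¹ * birk φ h n₀ (φ^[k] x)) = _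
    rw [Finset.mul_sum]
    refine Finset.sum_congr rfl fun k _ => ?_
    have hb := birk_add φ h k n₀ x
    have : u (k + n₀) - u k = birk φ h n₀ (φ^[k] x) := by
      simp only [hu]; rw [hb]; ring
    rw [this]
  have h2 : ∀ j, u (N + j) - u j = birk φ h N x + (birk φ h j (φ^[N] x) - birk φ h j x) := by
    intro j
    have hb := birk_add φ h N j x
    simp only [hu]; rw [hb]; ring
  have h3 : ∑ j ∈ Finset.range n₀, (u (N + j) - u j)
      = n₀ * birk φ h N x + ∑ j ∈ Finset.range n₀, (birk φ h j (φ^[N] x) - birk φ h j x) := by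
    calc ∑ j ∈ Finset.range n₀, (u (N + j) - u j)
        = ∑ j ∈ Finset.range n₀, (birk φ h N x + (birk φ h j (φ^[N] x) - birk φ h j x)) :=
          Finset.sum_congr rfl fun j _ => h2 j
      _ = _ := by rw [Finset.sum_add_distrib, Finset.sum_const, Finset.card_range,
            nsmul_eq_mul]
  have hE : |∑ j ∈ Finset.range n₀, (birk φ h j (φ^[N] x) - birk φ h j x)| ≤ n₀ * (2 * n₀ * M) := by
    calc |∑ j ∈ Finset.range n₀, (birk φ h j (φ^[N] x) - birk φ h j x)|
        ≤ ∑ j ∈ Finset.range n₀, |birk φ h j (φ^[N] x) - birk φ h j x| :=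
          Finset.abs_sum_le_sum_abs _ _
      _ ≤ ∑ _j ∈ Finset.range n₀, (2 * n₀ * M) := by
          refine Finset.sum_le_sum fun j hj => ?_
          have hj' : (j : ℝ) ≤ n₀ := by
            exact_mod_cast Nat.le_of_lt (Finset.mem_range.mp hj)
          have b1 := abs_birk_le hinv hM (iterate_memC hinv hx N) j
          have b2 := abs_birk_le hinv hM hx j
          have : |birk φ h j (φ^[N] x) - birk φ h j x|
              ≤ |birk φ h j (φ^[N] x)| + |birk φ h j x| := abs_sub _ _
          nlinarith [abs_nonneg (birk φ h j (φ^[N] x))]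
      _ = n₀ * (2 * n₀ * M) := by rw [Finset.sum_const, Finset.card_range, nsmul_eq_mul]
  have h4 : birk φ (fun y => ((n₀ : ℝ))⁻¹ * birk φ h n₀ y) N x - birk φ h N x
      = (n₀:ℝ)⁻¹ * ∑ j ∈ Finset.range n₀, (birk φ h j (φ^[N] x) - birk φ h j x) := by
    rw [h1, sum_shift, h3]
    field_simp
    ring
  rw [h4, abs_mul, abs_inv, abs_of_pos hn₀R]
  calc (n₀:ℝ)⁻¹ * |∑ j ∈ Finset.range n₀, (birk φ h j (φ^[N] x) - birk φ h j x)|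
      ≤ (n₀:ℝ)⁻¹ * (n₀ * (2 * n₀ * M)) := by
        exact mul_le_mul_of_nonneg_left hE (by positivity)
    _ = 2 * n₀ * M := by field_simp

end Sup

section SBirk

noncomputable def sbirk (φ : X → X) (h : X → ℝ) (C : Set X) (n : ℕ) : ℝ :=
  sSup (birk φ h n '' C)

variable {φ : X → X} {h : X → ℝ} {C : Set X}

lemma sbirk_bddAbove (hinv : Set.MapsTo φ C C) {M : ℝ} (hM : ∀ x ∈ C, |h x| ≤ M) (n : ℕ) :
    BddAbove (birk φ h n '' C) := by
  refine ⟨n * M, ?_⟩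
  rintro z ⟨x, hx, rfl⟩
  have := abs_birk_le hinv hM hx n
  exact le_trans (le_abs_self _) this

lemma le_sbirk (hinv : Set.MapsTo φ C C) {M : ℝ} (hM : ∀ x ∈ C, |h x| ≤ M) (n : ℕ)
    {x : X} (hx : x ∈ C) : birk φ h n x ≤ sbirk φ h C n :=
  le_csSup (sbirk_bddAbove hinv hM n) ⟨x, hx, rfl⟩

lemma sbirk_le (hCne : C.Nonempty) {n : ℕ} {b : ℝ} (hb : ∀ x ∈ C, birk φ h n x ≤ b) :
    sbirk φ h C n ≤ b := by
  refine csSup_le (hCne.image _) ?_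
  rintro z ⟨x, hx, rfl⟩; exact hb x hx

lemma sbirk_add (hCne : C.Nonempty) (hinv : Set.MapsTo φ C C)
    {M : ℝ} (hM : ∀ x ∈ C, |h x| ≤ M) (m n : ℕ) :
    sbirk φ h C (m + n) ≤ sbirk φ h C m + sbirk φ h C n := by
  refine sbirk_le hCne fun x hx => ?_
  rw [birk_add]
  have h1 := le_sbirk hinv hM m hx
  have h2 := le_sbirk hinv hM n (iterate_memC hinv hx m)
  linarith

lemma sbirk_mul (hCne : C.Nonempty) (hinv : Set.MapsTo φ C C)
    {M : ℝ} (hM : ∀ x ∈ C, |h x| ≤ M) (a n₀ : ℕ) :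
    sbirk φ h C (a * n₀) ≤ a * sbirk φ h C n₀ := by
  induction a with
  | zero =>
    simp only [Nat.zero_mul, Nat.cast_zero, zero_mul]
    refine sbirk_le hCne fun x hx => ?_
    simp [birk]
  | succ a ih =>
    have : (a + 1) * n₀ = a * n₀ + n₀ := by ring
    rw [this]
    calc sbirk φ h C (a * n₀ + n₀) ≤ sbirk φ h C (a * n₀) + sbirk φ h C n₀ :=
          sbirk_add hCne hinv hM _ _
      _ ≤ a * sbirk φ h C n₀ + sbirk φ h C n₀ := by linarith
      _ = (↑(a + 1) : ℝ) * sbirk φ h C n₀ := by push_cast; ring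

noncomputable def alphaB (φ : X → X) (h : X → ℝ) (C : Set X) : ℝ :=
  sInf (Set.range fun n : ℕ => sbirk φ h C (n + 1) / ((n : ℝ) + 1))

lemma sbirk_ge (hCne : C.Nonempty) (hinv : Set.MapsTo φ C C)
    {M : ℝ} (hM : ∀ x ∈ C, |h x| ≤ M) (n : ℕ) :
    -(n * M) ≤ sbirk φ h C n := by
  obtain ⟨x₀, hx₀⟩ := hCne
  have h1 := abs_birk_le hinv hM hx₀ n
  have h2 := le_sbirk hinv hM n hx₀
  have := neg_abs_le (birk φ h n x₀)
  linarith

lemma alphaB_bddBelow (hCne : C.Nonempty) (hinv : Set.MapsTo φ C C)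
    {M : ℝ} (hM0 : 0 ≤ M) (hM : ∀ x ∈ C, |h x| ≤ M) :
    BddBelow (Set.range fun n : ℕ => sbirk φ h C (n + 1) / ((n : ℝ) + 1)) := by
  refine ⟨-M, ?_⟩
  rintro z ⟨n, rfl⟩
  have hpos : (0:ℝ) < (n : ℝ) + 1 := by positivity
  have h1 := sbirk_ge hCne hinv hM (n + 1)
  show -M ≤ sbirk φ h C (n + 1) / ((n : ℝ) + 1)
  rw [le_div_iff₀ hpos]
  push_cast at h1 ⊢
  nlinarith

lemma alphaB_le (hCne : C.Nonempty) (hinv : Set.MapsTo φ C C)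
    {M : ℝ} (hM0 : 0 ≤ M) (hM : ∀ x ∈ C, |h x| ≤ M) (n : ℕ) :
    alphaB φ h C ≤ sbirk φ h C (n + 1) / ((n : ℝ) + 1) :=
  csInf_le (alphaB_bddBelow hCne hinv hM0 hM) ⟨n, rfl⟩

end SBirk


section Core

lemma card_filter_shift (p : ℕ → Prop) [DecidablePred p] (t m : ℕ) :
    ((Finset.range m).filter fun k => p (t + k)).card = ((Finset.Ico t (t + m)).filter p).card := by
  have himg : ((Finset.range m).filter fun k => p (t + k)).image (fun k => t + k)
      = (Finset.Ico t (t + m)).filter p := by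
    ext j
    simp only [Finset.mem_image, Finset.mem_filter, Finset.mem_range, Finset.mem_Ico]
    constructor
    · rintro ⟨k, ⟨hk, hpk⟩, rfl⟩
      exact ⟨⟨Nat.le_add_right _ _, by omega⟩, hpk⟩
    · rintro ⟨⟨h1, h2⟩, hpj⟩
      exact ⟨j - t, ⟨by omega, by rw [show t + (j - t) = j by omega]; exact hpj⟩, by omega⟩
  rw [← himg, Finset.card_image_of_injective _ (fun a b hab => by omega)]

lemma alphaB_nonpos {φ : X → X} {h : X → ℝ} {C : Set X}
    (hφ : Continuous φ) (hh : Continuous h)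
    (hC : IsCompact C) (hCne : C.Nonempty) (hinv : Set.MapsTo φ C C)
    {M : ℝ} (hM0 : 0 ≤ M) (hM : ∀ x ∈ C, |h x| ≤ M)
    (hpt : ∀ x ∈ C, Tendsto (fun n : ℕ => (n : ℝ)⁻¹ * birk φ h n x) atTop (nhds 0)) :
    alphaB φ h C ≤ 0 := by
  classical
  by_contra hcon
  push_neg at hcon
  set α := alphaB φ h C with hαdef
  -- α ≤ M
  have hs1 : sbirk φ h C 1 ≤ M := by
    refine sbirk_le hCne fun x hx => ?_
    have hb1 : birk φ h 1 x = h x := by simp [birk]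
    rw [hb1]; exact le_trans (le_abs_self _) (hM x hx)
  have hαM : α ≤ M := by
    have h0 := alphaB_le hCne hinv hM0 hM (φ := φ) (h := h) 0
    rw [← hαdef] at h0
    simp only [Nat.cast_zero, zero_add, div_one] at h0
    exact le_trans h0 hs1
  -- constants
  have hαMpos : (0:ℝ) < α + M + 1 := by linarith
  set δ : ℝ := α / 4 with hδdef
  set c : ℝ := α / (25 * (α + M + 1)) with hcdef
  set ε : ℝ := c * δ / 2 with hεdef
  have hδpos : 0 < δ := by rw [hδdef]; linarith
  have hcpos : 0 < c := by rw [hcdef]; positivity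
  have hεpos : 0 < ε := by rw [hεdef]; positivity
  have hc25 : c * (α + M + 1) = α / 25 := by rw [hcdef]; field_simp
  have hconst : 2*c*(α - δ + M) ≤ α/4 := by nlinarith
  have hαδ : 0 ≤ α - δ := by rw [hδdef]; linarith
  -- choose n₀
  have hex : ∃ n : ℕ, sbirk φ h C (n + 1) / ((n : ℝ) + 1) < α + ε := by
    by_contra hno
    push_neg at hno
    have hle : α + ε ≤ alphaB φ h C := by
      refine le_csInf (Set.range_nonempty _) ?_
      rintro b ⟨n, rfl⟩
      exact hno n
    rw [← hαdef] at hle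
    linarith
  obtain ⟨n', hn'⟩ := hex
  set n₀ : ℕ := n' + 1 with hn₀def
  have hn₀pos : 0 < n₀ := Nat.succ_pos _
  have hn₀R : (0:ℝ) < n₀ := by exact_mod_cast hn₀pos
  have hsn₀ : sbirk φ h C n₀ < (α + ε) * n₀ := by
    rw [div_lt_iff₀ (by positivity)] at hn'
    rw [hn₀def, show (((n' + 1 : ℕ)):ℝ) = (n':ℝ) + 1 by push_cast; ring]
    exact hn'
  -- the averaged function
  set h' : X → ℝ := fun y => ((n₀ : ℝ))⁻¹ * birk φ h n₀ y with hh'def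
  have hh' : Continuous h' := by
    rw [hh'def]; exact continuous_const.mul (birk_continuous hφ hh n₀)
  have h'le : ∀ x ∈ C, h' x ≤ α + ε := by
    intro x hx
    have h1 := le_sbirk hinv hM n₀ hx
    have h2 : birk φ h n₀ x ≤ (α + ε) * n₀ := le_trans h1 (le_of_lt hsn₀)
    rw [hh'def]
    calc ((n₀ : ℝ))⁻¹ * birk φ h n₀ x ≤ ((n₀ : ℝ))⁻¹ * ((α + ε) * n₀) :=
          mul_le_mul_of_nonneg_left h2 (by positivity)
      _ = α + ε := by field_simp
  have h'abs : ∀ x ∈ C, |h' x| ≤ M := by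
    intro x hx
    rw [hh'def]
    rw [show |((n₀ : ℝ))⁻¹ * birk φ h n₀ x| = ((n₀:ℝ))⁻¹ * |birk φ h n₀ x| by
      rw [abs_mul, abs_inv, abs_of_pos hn₀R]]
    calc ((n₀:ℝ))⁻¹ * |birk φ h n₀ x| ≤ ((n₀:ℝ))⁻¹ * (n₀ * M) :=
          mul_le_mul_of_nonneg_left (abs_birk_le hinv hM hx n₀) (by positivity)
      _ = M := by field_simp
  -- threshold
  obtain ⟨N₁, hN₁⟩ : ∃ N₁ : ℕ, ∀ N : ℕ, N₁ ≤ N → 1 + 2*(n₀:ℝ)*M ≤ ε * N := by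
    refine ⟨⌈(1 + 2*(n₀:ℝ)*M)/ε⌉₊, fun N hN => ?_⟩
    have h1 : (1 + 2*(n₀:ℝ)*M)/ε ≤ (N:ℝ) := le_trans (Nat.le_ceil _) (by exact_mod_cast hN)
    rw [div_le_iff₀ hεpos] at h1
    linarith
  -- key construction at scale N
  have keyN : ∀ N : ℕ, N₁ ≤ N → 1 ≤ N → ∃ y ∈ C, ∀ m : ℕ, 2*m ≤ N →
      ((((Finset.range m).filter fun k => h' (φ^[k] y) < α - δ)).card : ℝ) ≤ 2*c*m := by
    intro N hNN hN1
    obtain ⟨w, hwmem, hw⟩ := exists_lt_of_lt_csSup ((hCne.image (birk φ h N)))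
      (show sbirk φ h C N - 1 < sbirk φ h C N by linarith)
    obtain ⟨x, hxC, rfl⟩ := hwmem
    have hαN : α * N ≤ sbirk φ h C N := by
      obtain ⟨N'', rfl⟩ : ∃ N'', N = N'' + 1 := ⟨N - 1, by omega⟩
      have h2 := alphaB_le hCne hinv hM0 hM (φ := φ) (h := h) N''
      rw [← hαdef, le_div_iff₀ (by positivity)] at h2
      rw [show (((N'' + 1 : ℕ)):ℝ) = (N'':ℝ) + 1 by push_cast; ring]
      exact h2
    have hclose : |birk φ h' N x - birk φ h N x| ≤ 2*(n₀:ℝ)*M :=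
      birk_avg_close hinv hM0 hM hn₀pos hxC N
    have hbig : (α - ε) * N ≤ birk φ h' N x := by
      have hεN := hN₁ N hNN
      have h3 := (abs_le.mp hclose).1
      nlinarith [hαN, hw, h3]
    set bad : ℕ → Prop := fun k => h' (φ^[k] x) < α - δ with hbaddef
    have hsplit := Finset.sum_filter_add_sum_filter_not (Finset.range N) bad (fun k => h' (φ^[k] x))
    have hbirkeq : birk φ h' N x = ∑ k ∈ Finset.range N, h' (φ^[k] x) := rfl
    have hBsum : ∑ k ∈ (Finset.range N).filter bad, h' (φ^[k] x)
        ≤ ((((Finset.range N).filter bad)).card : ℝ) * (α - δ) := by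
      rw [← nsmul_eq_mul]
      refine Finset.sum_le_card_nsmul _ _ _ fun k hk => le_of_lt ?_
      exact (Finset.mem_filter.mp hk).2
    have hGsum : ∑ k ∈ (Finset.range N).filter (fun k => ¬ bad k), h' (φ^[k] x)
        ≤ ((((Finset.range N).filter (fun k => ¬ bad k))).card : ℝ) * (α + ε) := by
      rw [← nsmul_eq_mul]
      refine Finset.sum_le_card_nsmul _ _ _ fun k _ => ?_
      exact h'le _ (iterate_memC hinv hxC k)
    have hcards : (((Finset.range N).filter bad).card : ℝ)
        + (((Finset.range N).filter (fun k => ¬ bad k)).card : ℝ) = (N:ℝ) := by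
      have h4 := Finset.card_filter_add_card_filter_not (s := Finset.range N) (p := bad)
      rw [Finset.card_range] at h4
      exact_mod_cast h4
    have hBcard : ((((Finset.range N).filter bad)).card : ℝ) ≤ c * N := by
      have hkey : (α - ε) * N ≤ ((((Finset.range N).filter bad)).card : ℝ) * (α - δ)
          + ((((Finset.range N).filter (fun k => ¬ bad k))).card : ℝ) * (α + ε) := by
        calc (α - ε) * N ≤ birk φ h' N x := hbig
          _ = _ := by rw [hbirkeq, ← hsplit]
          _ ≤ _ := add_le_add hBsum hGsum
      have hεc : 2 * ε = c * δ := by rw [hεdef]; ring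
      have hBnn : (0:ℝ) ≤ ((((Finset.range N).filter bad)).card : ℝ) := Nat.cast_nonneg _
      nlinarith [hkey, hcards, hεc, hδpos, hεpos, hBnn]
    set dc : ℕ → ℕ := fun t => ((Finset.range t).filter bad).card with hdcdef
    obtain ⟨t, htmem, htmax⟩ := Finset.exists_max_image (Finset.range (N+1))
      (fun t => (dc t : ℝ) - 2*c*t) ⟨0, Finset.mem_range.mpr (by omega)⟩
    have htN : t ≤ N := by have := Finset.mem_range.mp htmem; omega
    have hd0 : (0:ℝ) ≤ (dc t : ℝ) - 2*c*t := by
      have h5 : (dc 0 : ℝ) - 2*c*((0:ℕ):ℝ) ≤ (dc t : ℝ) - 2*c*t :=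
        htmax 0 (Finset.mem_range.mpr (by omega))
      have hdc0 : dc 0 = 0 := by rw [hdcdef]; simp
      rw [hdc0] at h5
      simpa using h5
    have hdmon : dc t ≤ dc N :=
      Finset.card_le_card (Finset.filter_subset_filter _ (Finset.range_subset_range.mpr htN))
    have ht2 : 2*t ≤ N := by
      have hdN : (dc N : ℝ) ≤ c * N := hBcard
      have hmc : (dc t : ℝ) ≤ (dc N : ℝ) := by exact_mod_cast hdmon
      have h7 : c * (2*(t:ℝ)) ≤ c * (N:ℝ) := by nlinarith [hd0, hdN, hmc]
      have h8 : (2*(t:ℝ)) ≤ (N:ℝ) := le_of_mul_le_mul_left h7 hcpos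
      exact_mod_cast h8
    refine ⟨φ^[t] x, iterate_memC hinv hxC t, fun m hm => ?_⟩
    have htm : t + m ≤ N := by omega
    have hiter : ∀ k : ℕ, φ^[k] (φ^[t] x) = φ^[t + k] x := fun k => by
      rw [Nat.add_comm, Function.iterate_add_apply]
    have hfeq : ((Finset.range m).filter fun k => h' (φ^[k] (φ^[t] x)) < α - δ)
        = ((Finset.range m).filter fun k => bad (t + k)) := by
      refine Finset.filter_congr fun k _ => ?_
      rw [hiter k, hbaddef]
    have hcnt : ((Finset.range m).filter fun k => h' (φ^[k] (φ^[t] x)) < α - δ).card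
        = ((Finset.Ico t (t+m)).filter bad).card := by
      rw [hfeq]
      exact card_filter_shift bad t m
    have hsplitd : dc (t + m) = dc t + ((Finset.Ico t (t+m)).filter bad).card := by
      rw [hdcdef]
      show ((Finset.range (t+m)).filter bad).card = _
      rw [Finset.range_eq_Ico,
        ← Finset.Ico_union_Ico_eq_Ico (Nat.zero_le t) (Nat.le_add_right t m),
        Finset.filter_union,
        Finset.card_union_of_disjoint
          (Finset.disjoint_filter_filter (Finset.Ico_disjoint_Ico_consecutive 0 t (t+m))),
        ← Finset.range_eq_Ico]
    have hmax2 : (dc (t+m) : ℝ) - 2*c*(((t+m:ℕ)):ℝ) ≤ (dc t : ℝ) - 2*c*t :=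
      htmax (t+m) (Finset.mem_range.mpr (by omega))
    rw [hcnt]
    have hcast : ((dc (t+m)):ℝ) = (dc t : ℝ) + (((Finset.Ico t (t+m)).filter bad).card : ℝ) := by
      exact_mod_cast hsplitd
    push_cast at hmax2
    rw [hcast] at hmax2
    linarith
  -- choose witnesses for all N
  obtain ⟨x₀, hx₀⟩ := hCne
  have keyN' : ∀ N : ℕ, ∃ y : X, (N₁ ≤ N ∧ 1 ≤ N) → (y ∈ C ∧ ∀ m : ℕ, 2*m ≤ N →
      ((((Finset.range m).filter fun k => h' (φ^[k] y) < α - δ)).card : ℝ) ≤ 2*c*m) := by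
    intro N
    by_cases hN : N₁ ≤ N ∧ 1 ≤ N
    · obtain ⟨y, hyC, hy⟩ := keyN N hN.1 hN.2
      exact ⟨y, fun _ => ⟨hyC, hy⟩⟩
    · exact ⟨x₀, fun hc' => absurd hc' hN⟩
  choose Y hY using keyN'
  set 𝒰 : Ultrafilter ℕ := Ultrafilter.of atTop with h𝒰def
  have h𝒰 : (𝒰 : Filter ℕ) ≤ atTop := Ultrafilter.of_le _
  have hYC : ∀ᶠ N in (𝒰 : Filter ℕ), Y N ∈ C := by
    have hev : ∀ᶠ N in (𝒰 : Filter ℕ), N₁ ≤ N ∧ 1 ≤ N := by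
      refine Filter.Eventually.filter_mono h𝒰 ?_
      filter_upwards [eventually_ge_atTop N₁, eventually_ge_atTop 1] with N u1 u2
      exact ⟨u1, u2⟩
    exact hev.mono fun N hN => (hY N hN).1
  obtain ⟨z, hzC, hz⟩ := hC.ultrafilter_le_nhds (𝒰.map Y) (by
    rw [Ultrafilter.coe_map, Filter.le_principal_iff, Filter.mem_map]
    exact hYC)
  rw [Ultrafilter.coe_map] at hz
  have hzcount : ∀ m : ℕ,
      ((((Finset.range m).filter fun k => h' (φ^[k] z) < α - δ)).card : ℝ) ≤ 2*c*m := by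
    intro m
    set Bz := (Finset.range m).filter fun k => h' (φ^[k] z) < α - δ with hBzdef
    have hVopen : IsOpen {y : X | ∀ k ∈ Bz, h' (φ^[k] y) < α - δ} := by
      have hscribe : {y : X | ∀ k ∈ Bz, h' (φ^[k] y) < α - δ}
          = ⋂ k ∈ Bz, {y : X | h' (φ^[k] y) < α - δ} := by
        ext y; simp
      rw [hscribe]
      refine isOpen_biInter_finset fun k _ => ?_
      exact isOpen_lt (hh'.comp (hφ.iterate k)) continuous_const
    have hzV : z ∈ {y : X | ∀ k ∈ Bz, h' (φ^[k] y) < α - δ} :=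
      fun k hk => (Finset.mem_filter.mp hk).2
    have hmemV : ∀ᶠ N in (𝒰 : Filter ℕ), Y N ∈ {y : X | ∀ k ∈ Bz, h' (φ^[k] y) < α - δ} :=
      hz (hVopen.mem_nhds hzV)
    have hbigN : ∀ᶠ N in (𝒰 : Filter ℕ), N₁ ≤ N ∧ 1 ≤ N ∧ 2*m ≤ N := by
      refine Filter.Eventually.filter_mono h𝒰 ?_
      filter_upwards [eventually_ge_atTop N₁, eventually_ge_atTop 1,
        eventually_ge_atTop (2*m)] with N u1 u2 u3
      exact ⟨u1, u2, u3⟩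
    obtain ⟨N, hNV, hN1, hN2, hN3⟩ := (hmemV.and hbigN).exists
    obtain ⟨hYNC, hYcnt⟩ := hY N ⟨hN1, hN2⟩
    have hsub : Bz ⊆ (Finset.range m).filter fun k => h' (φ^[k] (Y N)) < α - δ := by
      intro k hk
      rw [Finset.mem_filter]
      exact ⟨(Finset.mem_filter.mp hk).1, hNV k hk⟩
    calc ((Bz.card):ℝ)
        ≤ (((Finset.range m).filter fun k => h' (φ^[k] (Y N)) < α - δ).card : ℝ) := by
          exact_mod_cast Finset.card_le_card hsub
      _ ≤ 2*c*m := hYcnt m hN3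
  have hlow : ∀ m : ℕ, (α/2) * m ≤ birk φ h' m z := by
    intro m
    set bad2 : ℕ → Prop := fun k => h' (φ^[k] z) < α - δ with hbad2
    have hsplit := Finset.sum_filter_add_sum_filter_not (Finset.range m) bad2 (fun k => h' (φ^[k] z))
    have hBsum : (((Finset.range m).filter bad2).card : ℝ) * (-M)
        ≤ ∑ k ∈ (Finset.range m).filter bad2, h' (φ^[k] z) := by
      rw [← nsmul_eq_mul]
      refine Finset.card_nsmul_le_sum _ _ _ fun k _ => ?_
      exact (abs_le.mp (h'abs _ (iterate_memC hinv hzC k))).1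
    have hGsum : (((Finset.range m).filter fun k => ¬ bad2 k).card : ℝ) * (α - δ)
        ≤ ∑ k ∈ (Finset.range m).filter (fun k => ¬ bad2 k), h' (φ^[k] z) := by
      rw [← nsmul_eq_mul]
      refine Finset.card_nsmul_le_sum _ _ _ fun k hk => ?_
      have h10 := (Finset.mem_filter.mp hk).2
      rw [hbad2] at h10
      exact not_lt.mp h10
    have hcards : (((Finset.range m).filter bad2).card : ℝ)
        + (((Finset.range m).filter fun k => ¬ bad2 k).card : ℝ) = (m:ℝ) := by
      have h4 := Finset.card_filter_add_card_filter_not (s := Finset.range m) (p := bad2)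
      rw [Finset.card_range] at h4
      exact_mod_cast h4
    have hcnt : (((Finset.range m).filter bad2).card : ℝ) ≤ 2*c*m := hzcount m
    have hbirkeq : birk φ h' m z = ∑ k ∈ Finset.range m, h' (φ^[k] z) := rfl
    have hBnn : (0:ℝ) ≤ (((Finset.range m).filter bad2).card : ℝ) := Nat.cast_nonneg _
    have hamM : (0:ℝ) ≤ α - δ + M := by linarith
    have hp1 : (0:ℝ) ≤ (2*c*(m:ℝ) - (((Finset.range m).filter bad2).card : ℝ)) * (α - δ + M) :=
      mul_nonneg (by linarith) hamM
    have hp2 : 2*c*(α - δ + M) * (m:ℝ) ≤ (α/4) * m :=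
      mul_le_mul_of_nonneg_right hconst (Nat.cast_nonneg m)
    rw [hbirkeq, ← hsplit]
    nlinarith [hBsum, hGsum, hcards, hp1, hp2]
  -- contradiction with pointwise convergence at z
  have hptz := hpt z hzC
  have hdiff : ∀ m : ℕ, |(m:ℝ)⁻¹ * birk φ h' m z - (m:ℝ)⁻¹ * birk φ h m z|
      ≤ (m:ℝ)⁻¹ * (2*(n₀:ℝ)*M) := by
    intro m
    rcases Nat.eq_zero_or_pos m with rfl | hm
    · simp
    · have hmR : (0:ℝ) < m := by exact_mod_cast hm
      rw [← mul_sub, abs_mul, abs_inv, abs_of_pos hmR]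
      exact mul_le_mul_of_nonneg_left (birk_avg_close hinv hM0 hM hn₀pos hzC m) (by positivity)
  have hlim2 : Tendsto (fun m : ℕ => (m:ℝ)⁻¹ * (2*(n₀:ℝ)*M)) atTop (nhds 0) := by
    have h8 : Tendsto (fun m : ℕ => ((m:ℝ))⁻¹) atTop (nhds 0) :=
      tendsto_inv_atTop_nhds_zero_nat
    simpa using h8.mul_const (2*(n₀:ℝ)*M)
  have hdiff0 : Tendsto (fun m : ℕ => (m:ℝ)⁻¹ * birk φ h' m z - (m:ℝ)⁻¹ * birk φ h m z)
      atTop (nhds 0) := squeeze_zero_norm hdiff hlim2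
  have hptz' : Tendsto (fun m : ℕ => (m:ℝ)⁻¹ * birk φ h' m z) atTop (nhds 0) := by
    have h11 := hdiff0.add hptz
    simpa using h11
  have hfin : α/2 ≤ 0 := by
    refine ge_of_tendsto hptz' ?_
    filter_upwards [eventually_ge_atTop 1] with m hm
    have h9 := hlow m
    have hmR : (0:ℝ) < m := by exact_mod_cast hm
    calc α/2 = (m:ℝ)⁻¹ * ((α/2) * m) := by field_simp
      _ ≤ (m:ℝ)⁻¹ * birk φ h' m z := mul_le_mul_of_nonneg_left h9 (by positivity)
  linarith


lemma birk_neg (φ : X → X) (h : X → ℝ) (n : ℕ) (x : X) :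
    birk φ (fun y => - h y) n x = - birk φ h n x := by
  simp [birk]

lemma birk_le_eps {φ : X → X} {h : X → ℝ} {C : Set X}
    (hφ : Continuous φ) (hh : Continuous h)
    (hC : IsCompact C) (hCne : C.Nonempty) (hinv : Set.MapsTo φ C C)
    {M : ℝ} (hM0 : 0 ≤ M) (hM : ∀ x ∈ C, |h x| ≤ M)
    (hpt : ∀ x ∈ C, Tendsto (fun n : ℕ => (n : ℝ)⁻¹ * birk φ h n x) atTop (nhds 0))
    {ε : ℝ} (hε : 0 < ε) :
    ∀ᶠ N in atTop, ∀ x ∈ C, birk φ h N x ≤ ε * N := by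
  have hα := alphaB_nonpos hφ hh hC hCne hinv hM0 hM hpt
  have hex : ∃ n : ℕ, sbirk φ h C (n+1) / ((n:ℝ)+1) < ε/2 := by
    by_contra hno
    push_neg at hno
    have hle : ε/2 ≤ alphaB φ h C := by
      refine le_csInf (Set.range_nonempty _) ?_
      rintro b ⟨n, rfl⟩
      exact hno n
    linarith
  obtain ⟨n', hn'⟩ := hex
  set n₀ := n' + 1 with hn₀def
  have hn₀pos : 0 < n₀ := Nat.succ_pos _
  have hn₀R : (0:ℝ) < (n₀:ℝ) := by exact_mod_cast hn₀pos
  have hsn₀ : sbirk φ h C n₀ ≤ (ε/2) * n₀ := by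
    rw [div_lt_iff₀ (by positivity)] at hn'
    rw [hn₀def, show (((n'+1:ℕ)):ℝ) = (n':ℝ)+1 by push_cast; ring]
    rw [hn₀def] at hn'
    linarith [hn']
  have hsr : ∀ r : ℕ, r ≤ n₀ → sbirk φ h C r ≤ n₀ * M := by
    intro r hr
    refine sbirk_le hCne fun x hx => ?_
    have h1 := abs_birk_le hinv hM hx r
    have hrR : (r:ℝ) ≤ (n₀:ℝ) := by exact_mod_cast hr
    have h2 : (r:ℝ) * M ≤ (n₀:ℝ) * M := by nlinarith
    linarith [le_abs_self (birk φ h r x)]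
  obtain ⟨N₂, hN₂⟩ : ∃ N₂ : ℕ, ∀ N : ℕ, N₂ ≤ N → (n₀:ℝ) * M ≤ (ε/2) * N := by
    refine ⟨⌈((n₀:ℝ) * M)/(ε/2)⌉₊, fun N hN => ?_⟩
    have h1 : ((n₀:ℝ)*M)/(ε/2) ≤ (N:ℝ) := le_trans (Nat.le_ceil _) (by exact_mod_cast hN)
    rw [div_le_iff₀ (by positivity)] at h1
    linarith
  filter_upwards [eventually_ge_atTop N₂] with N hN x hx
  obtain ⟨Q, r, hr, hNeq⟩ : ∃ Q r, r < n₀ ∧ N = Q * n₀ + r := by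
    refine ⟨N / n₀, N % n₀, Nat.mod_lt _ hn₀pos, ?_⟩
    rw [mul_comm]
    exact (Nat.div_add_mod N n₀).symm
  subst hNeq
  have hqs : sbirk φ h C (Q * n₀ + r) ≤ (Q:ℝ) * sbirk φ h C n₀ + sbirk φ h C r := by
    have h1 := sbirk_add hCne hinv hM (Q * n₀) r
    have h2 := sbirk_mul hCne hinv hM Q n₀
    linarith
  have hbx := le_sbirk hinv hM (Q*n₀+r) hx
  have hqn₀ : (Q:ℝ) * sbirk φ h C n₀ ≤ (ε/2) * ((Q:ℝ) * n₀) := by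
    have h1 : (Q:ℝ) * sbirk φ h C n₀ ≤ (Q:ℝ) * ((ε/2) * n₀) :=
      mul_le_mul_of_nonneg_left hsn₀ (Nat.cast_nonneg Q)
    linarith [h1]
  have hrs : sbirk φ h C r ≤ (n₀:ℝ) * M := hsr r (le_of_lt hr)
  have hNb := hN₂ _ hN
  have hcast : ((Q * n₀ + r : ℕ) : ℝ) = (Q:ℝ) * n₀ + r := by push_cast; ring
  have hQn : (Q:ℝ) * n₀ ≤ ((Q * n₀ + r : ℕ) : ℝ) := by
    rw [hcast]
    have hr0 : (0:ℝ) ≤ (r:ℝ) := Nat.cast_nonneg r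
    linarith
  have hNnn : (0:ℝ) ≤ ((Q * n₀ + r : ℕ) : ℝ) := Nat.cast_nonneg _
  nlinarith [hbx, hqs, hqn₀, hrs, hNb, hQn, hε.le]

lemma birk_uniform {φ : X → X} {h : X → ℝ} {C : Set X}
    (hφ : Continuous φ) (hh : Continuous h)
    (hC : IsCompact C) (hinv : Set.MapsTo φ C C)
    (hpt : ∀ x ∈ C, Tendsto (fun n : ℕ => (n : ℝ)⁻¹ * birk φ h n x) atTop (nhds 0)) :
    TendstoUniformlyOn (fun (n : ℕ) (x : X) => (n:ℝ)⁻¹ * birk φ h n x) 0 atTop C := by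
  rcases C.eq_empty_or_nonempty with rfl | hCne
  · exact tendstoUniformlyOn_empty
  obtain ⟨xm, hxmC, hxm⟩ := hC.exists_isMaxOn hCne (continuous_abs.comp hh).continuousOn
  set M := |h xm| with hMdef
  have hM0 : 0 ≤ M := abs_nonneg _
  have hM : ∀ x ∈ C, |h x| ≤ M := fun x hx => hxm hx
  rw [Metric.tendstoUniformlyOn_iff]
  intro ε hε
  have hub := birk_le_eps hφ hh hC hCne hinv hM0 hM hpt (half_pos hε)
  have hptn : ∀ x ∈ C, Tendsto (fun n : ℕ => (n : ℝ)⁻¹ * birk φ (fun y => - h y) n x)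
      atTop (nhds 0) := by
    intro x hx
    have h1 := (hpt x hx).neg
    rw [neg_zero] at h1
    refine h1.congr fun n => ?_
    rw [birk_neg]
    ring
  have hlb := birk_le_eps hφ (hh.neg) hC hCne hinv hM0
    (fun x hx => by simpa using hM x hx) hptn (half_pos hε)
  filter_upwards [hub, hlb, eventually_ge_atTop 1] with N h1 h2 hN1 x hx
  have hNR : (0:ℝ) < N := by exact_mod_cast hN1
  have hb1 := h1 x hx
  have hb2 : birk φ (fun y => - h y) N x ≤ ε/2 * N := h2 x hx
  rw [birk_neg] at hb2
  have habs : |birk φ h N x| ≤ (ε/2) * N := abs_le.mpr ⟨by linarith, hb1⟩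
  rw [Real.dist_eq, Pi.zero_apply]
  rw [show |0 - (N:ℝ)⁻¹ * birk φ h N x| = (N:ℝ)⁻¹ * |birk φ h N x| by
    rw [zero_sub, abs_neg, abs_mul, abs_inv, abs_of_pos hNR]]
  calc (N:ℝ)⁻¹ * |birk φ h N x| ≤ (N:ℝ)⁻¹ * ((ε/2) * N) :=
        mul_le_mul_of_nonneg_left habs (by positivity)
    _ = ε/2 := by field_simp
    _ < ε := by linarith

lemma lim_le_of_avg_le {φ : X → X} {h : X → ℝ}
    {C : Set X} (hinv : Set.MapsTo φ C C) {M : ℝ} (hM0 : 0 ≤ M) (hM : ∀ x ∈ C, |h x| ≤ M)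
    {y₀ : X} (hy₀ : y₀ ∈ C) {γ : ℝ}
    (hγ : Tendsto (fun n : ℕ => (n:ℝ)⁻¹ * birk φ h n y₀) atTop (nhds γ))
    {N : ℕ} (hN : 0 < N) {b : ℝ} (hb : ∀ y ∈ C, (N:ℝ)⁻¹ * birk φ h N y ≤ b) :
    γ ≤ b := by
  have key : ∀ m : ℕ, birk φ (fun y => ((N : ℝ))⁻¹ * birk φ h N y) m y₀ ≤ m * b := by
    intro m
    have h1 : birk φ (fun y => ((N : ℝ))⁻¹ * birk φ h N y) m y₀
        = ∑ k ∈ Finset.range m, ((N : ℝ))⁻¹ * birk φ h N (φ^[k] y₀) := rfl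
    have h2 : ∑ k ∈ Finset.range m, ((N : ℝ))⁻¹ * birk φ h N (φ^[k] y₀)
        ≤ (Finset.range m).card • b :=
      Finset.sum_le_card_nsmul _ _ _ fun k _ => hb _ (iterate_memC hinv hy₀ k)
    rw [Finset.card_range, nsmul_eq_mul] at h2
    rw [h1]
    exact h2
  have h2NM : Tendsto (fun m : ℕ => (m:ℝ)⁻¹ * (2*(N:ℝ)*M)) atTop (nhds 0) := by
    have h8 : Tendsto (fun m : ℕ => ((m:ℝ))⁻¹) atTop (nhds 0) :=
      tendsto_inv_atTop_nhds_zero_nat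
    simpa using h8.mul_const (2*(N:ℝ)*M)
  have hlim : Tendsto (fun m : ℕ => (m:ℝ)⁻¹ * birk φ h m y₀ - (m:ℝ)⁻¹ * (2*(N:ℝ)*M))
      atTop (nhds γ) := by
    simpa using hγ.sub h2NM
  refine le_of_tendsto hlim ?_
  filter_upwards [eventually_ge_atTop 1] with m hm
  have hmR : (0:ℝ) < m := by exact_mod_cast hm
  have hcl := (abs_le.mp (birk_avg_close hinv hM0 hM hN hy₀ m)).1
  have h3 : birk φ h m y₀ ≤ (m:ℝ) * b + 2*(N:ℝ)*M := by linarith [key m]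
  have h4 : (m:ℝ)⁻¹ * birk φ h m y₀ ≤ (m:ℝ)⁻¹ * ((m:ℝ) * b + 2*(N:ℝ)*M) :=
    mul_le_mul_of_nonneg_left h3 (by positivity)
  have h5 : (m:ℝ)⁻¹ * ((m:ℝ) * b + 2*(N:ℝ)*M) = b + (m:ℝ)⁻¹ * (2*(N:ℝ)*M) := by
    field_simp
  linarith

end Core

section Backward

variable {K : Type*} {L : Type*} [TopologicalSpace K] [CompactSpace K] [T2Space K]
  [TopologicalSpace L] [T2Space L]

lemma qiter {φ : K → K} {q : K → L} (hqφ : ∀ x, q (φ x) = q x) :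
    ∀ (k : ℕ) (x : K), q (φ^[k] x) = q x := by
  intro k
  induction k with
  | zero => intro x; simp
  | succ n ih => intro x; rw [Function.iterate_succ_apply', hqφ, ih]

lemma real_backward {φ : K → K} (hφ : Continuous φ) {q : K → L} (hq : Continuous q)
    (hqsurj : Function.Surjective q) (hqφ : ∀ x, q (φ x) = q x)
    (u : K → ℝ) (hu : Continuous u) (c : L → ℝ)
    (hc : ∀ x : K, Tendsto (fun n : ℕ => (n:ℝ)⁻¹ * birk φ u n x) atTop (nhds (c (q x)))) :
    TendstoUniformly (fun (n:ℕ) (x : K) => (n:ℝ)⁻¹ * birk φ u n x) (fun x => c (q x)) atTop := by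
  rcases isEmpty_or_nonempty K with hK | hK
  · rw [← tendstoUniformlyOn_univ, Set.univ_eq_empty_iff.mpr hK]
    exact tendstoUniformlyOn_empty
  obtain ⟨xm, -, hxm⟩ := isCompact_univ.exists_isMaxOn Set.univ_nonempty
    (continuous_abs.comp hu).continuousOn
  set M := |u xm| with hMdef
  have hM0 : 0 ≤ M := abs_nonneg _
  have hMb : ∀ x : K, |u x| ≤ M := fun x => hxm (Set.mem_univ x)
  have hq_iter : ∀ (k : ℕ) (x : K), q (φ^[k] x) = q x := qiter hqφ
  have hfibc : ∀ l : L, IsCompact (q ⁻¹' {l}) :=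
    fun l => (isClosed_singleton.preimage hq).isCompact
  have hfibinv : ∀ l : L, Set.MapsTo φ (q ⁻¹' {l}) (q ⁻¹' {l}) := by
    intro l x hx
    simp only [Set.mem_preimage, Set.mem_singleton_iff] at *
    rw [hqφ]
    exact hx
  have hshift : ∀ (l : L) (n : ℕ) (x : K), birk φ (fun y => u y - c l) n x
      = birk φ u n x - n * c l := by
    intro l n x
    show ∑ k ∈ Finset.range n, (u (φ^[k] x) - c l) = _
    rw [Finset.sum_sub_distrib, Finset.sum_const, Finset.card_range, nsmul_eq_mul]
    rfl
  have hpt0 : ∀ (l : L), ∀ x ∈ q ⁻¹' {l},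
      Tendsto (fun n : ℕ => (n:ℝ)⁻¹ * birk φ (fun y => u y - c l) n x) atTop (nhds 0) := by
    intro l x hx
    have hql : q x = l := hx
    have h1 : Tendsto (fun n : ℕ => (n:ℝ)⁻¹ * birk φ u n x - c l) atTop (nhds 0) := by
      have h2 := (hc x).sub_const (c l)
      rw [hql] at h2
      simpa using h2
    refine h1.congr' ?_
    filter_upwards [eventually_ge_atTop 1] with n hn
    have hnR : (0:ℝ) < n := by exact_mod_cast hn
    rw [hshift]
    field_simp
  have hfib_unif : ∀ (l : L) (ε : ℝ), 0 < ε → ∃ N : ℕ, 0 < N ∧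
      ∀ x ∈ q ⁻¹' {l}, |(N:ℝ)⁻¹ * birk φ u N x - c l| < ε := by
    intro l ε hε
    have h1 := birk_uniform hφ (hu.sub continuous_const) (hfibc l) (hfibinv l) (hpt0 l)
    rw [Metric.tendstoUniformlyOn_iff] at h1
    obtain ⟨N, hN1, hN2⟩ := ((h1 ε hε).and (eventually_ge_atTop 1)).exists
    refine ⟨N, hN2, fun x hx => ?_⟩
    have h3 := hN1 x hx
    rw [Real.dist_eq, Pi.zero_apply] at h3
    have hNR : (0:ℝ) < N := by exact_mod_cast hN2
    change |0 - (N:ℝ)⁻¹ * birk φ (fun y => u y - c l) N x| < ε at h3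
    rw [hshift] at h3
    rw [show (N:ℝ)⁻¹ * (birk φ u N x - (N:ℝ) * c l) = (N:ℝ)⁻¹ * birk φ u N x - c l by
      field_simp] at h3
    rwa [zero_sub, abs_neg] at h3
  have hcle : ∀ (l : L) (N : ℕ), 0 < N → ∀ b : ℝ,
      (∀ y ∈ q ⁻¹' {l}, (N:ℝ)⁻¹ * birk φ u N y ≤ b) → c l ≤ b := by
    intro l N hN b hb
    obtain ⟨y₀, hy₀⟩ := hqsurj l
    have hy₀mem : y₀ ∈ q ⁻¹' {l} := hy₀
    have hγ : Tendsto (fun n : ℕ => (n:ℝ)⁻¹ * birk φ u n y₀) atTop (nhds (c l)) := by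
      have h1 := hc y₀
      rwa [hy₀] at h1
    exact lim_le_of_avg_le (hfibinv l) hM0 (fun x _ => hMb x) hy₀mem hγ hN hb
  have hcge : ∀ (l : L) (N : ℕ), 0 < N → ∀ b : ℝ,
      (∀ y ∈ q ⁻¹' {l}, b ≤ (N:ℝ)⁻¹ * birk φ u N y) → b ≤ c l := by
    intro l N hN b hb
    obtain ⟨y₀, hy₀⟩ := hqsurj l
    have hy₀mem : y₀ ∈ q ⁻¹' {l} := hy₀
    have hγ : Tendsto (fun n : ℕ => (n:ℝ)⁻¹ * birk φ (fun y => - u y) n y₀)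
        atTop (nhds (- c l)) := by
      have h1 := (hc y₀).neg
      rw [hy₀] at h1
      refine h1.congr fun n => ?_
      rw [birk_neg]
      ring
    have h2 : ∀ y ∈ q ⁻¹' {l}, (N:ℝ)⁻¹ * birk φ (fun y => - u y) N y ≤ -b := by
      intro y hy
      rw [birk_neg, mul_neg]
      linarith [hb y hy]
    have h3 := lim_le_of_avg_le (hfibinv l) hM0
      (fun x _ => by simpa using hMb x) hy₀mem hγ hN h2
    linarith
  -- birk identity for the globally shifted function
  have hbidentG : ∀ (n : ℕ) (x : K), birk φ (fun y => u y - c (q y)) n x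
      = birk φ u n x - n * c (q x) := by
    intro n x
    show ∑ k ∈ Finset.range n, (u (φ^[k] x) - c (q (φ^[k] x))) = _
    have h1 : ∀ k ∈ Finset.range n,
        u (φ^[k] x) - c (q (φ^[k] x)) = u (φ^[k] x) - c (q x) := by
      intro k _
      rw [hq_iter k x]
    rw [Finset.sum_congr rfl h1, Finset.sum_sub_distrib, Finset.sum_const,
      Finset.card_range, nsmul_eq_mul]
    rfl
  -- continuity of x ↦ c (q x)
  have hgcont : Continuous (fun x : K => c (q x)) := by
    rw [continuous_iff_continuousAt]
    intro x₀
    unfold ContinuousAt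
    rw [Metric.tendsto_nhds]
    intro ε hε
    obtain ⟨N, hN, hNfib⟩ := hfib_unif (q x₀) (ε/2) (by linarith)
    set U : Set K := {x : K | |(N:ℝ)⁻¹ * birk φ u N x - c (q x₀)| < ε/2} with hUdef
    have hUopen : IsOpen U := by
      have h1 : Continuous fun x : K => |(N:ℝ)⁻¹ * birk φ u N x - c (q x₀)| :=
        ((continuous_const.mul (birk_continuous hφ hu N)).sub continuous_const).abs
      exact isOpen_lt h1 continuous_const
    have hFU : q ⁻¹' {q x₀} ⊆ U := fun y hy => hNfib y hy
    have hclosedmap : IsClosedMap q := hq.isClosedMap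
    set W : Set K := (q ⁻¹' (q '' Uᶜ))ᶜ with hWdef
    have hWopen : IsOpen W := by
      have h1 : IsClosed (q '' Uᶜ) := hclosedmap _ hUopen.isClosed_compl
      exact isOpen_compl_iff.mpr (h1.preimage hq)
    have hx₀W : x₀ ∈ W := by
      simp only [hWdef, Set.mem_compl_iff, Set.mem_preimage, Set.mem_image]
      rintro ⟨y, hyU, hyq⟩
      exact hyU (hFU (show y ∈ q ⁻¹' {q x₀} by simp [Set.mem_preimage, hyq]))
    have hWfib : ∀ x ∈ W, ∀ y : K, q y = q x → y ∈ U := by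
      intro x hx y hyq
      by_contra hyU
      exact hx ⟨y, hyU, hyq⟩
    filter_upwards [hWopen.mem_nhds hx₀W] with x hxW
    have hub : c (q x) ≤ c (q x₀) + ε/2 := by
      refine hcle (q x) N hN _ fun y hy => ?_
      have hyU := hWfib x hxW y hy
      simp only [hUdef, Set.mem_setOf_eq] at hyU
      have h2 := abs_lt.mp hyU
      linarith [h2.2]
    have hlb : c (q x₀) - ε/2 ≤ c (q x) := by
      refine hcge (q x) N hN _ fun y hy => ?_
      have hyU := hWfib x hxW y hy
      simp only [hUdef, Set.mem_setOf_eq] at hyU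
      have h2 := abs_lt.mp hyU
      linarith [h2.1]
    rw [Real.dist_eq, abs_lt]
    constructor <;> linarith
  -- final uniform convergence
  have hfin : ∀ x : K, Tendsto (fun n : ℕ => (n:ℝ)⁻¹ * birk φ (fun y => u y - c (q y)) n x)
      atTop (nhds 0) := by
    intro x
    have h1 : Tendsto (fun n : ℕ => (n:ℝ)⁻¹ * birk φ u n x - c (q x)) atTop (nhds 0) := by
      simpa using (hc x).sub_const (c (q x))
    refine h1.congr' ?_
    filter_upwards [eventually_ge_atTop 1] with n hn
    have hnR : (0:ℝ) < n := by exact_mod_cast hn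
    rw [hbidentG]
    field_simp
  have huni := birk_uniform hφ (hu.sub hgcont) isCompact_univ
    (fun x _ => Set.mem_univ (φ x)) (fun x _ => hfin x)
  rw [← tendstoUniformlyOn_univ, Metric.tendstoUniformlyOn_iff]
  intro ε hε
  rw [Metric.tendstoUniformlyOn_iff] at huni
  filter_upwards [huni ε hε, eventually_ge_atTop 1] with n h1 hn x hx
  have h2 := h1 x hx
  rw [Real.dist_eq, Pi.zero_apply] at h2
  have hnR : (0:ℝ) < n := by exact_mod_cast hn
  change |0 - (n:ℝ)⁻¹ * birk φ (fun y => u y - c (q y)) n x| < ε at h2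
  rw [hbidentG n x] at h2
  rw [show (n:ℝ)⁻¹ * (birk φ u n x - (n:ℝ) * c (q x))
      = (n:ℝ)⁻¹ * birk φ u n x - c (q x) by field_simp] at h2
  rw [zero_sub, abs_neg] at h2
  rw [Real.dist_eq, abs_sub_comm]
  exact h2

end Backward

section Complexify

variable {X : Type*} [TopologicalSpace X]

lemma re_avg (φ : X → X) (f : X → ℂ) (n : ℕ) (x : X) :
    (((n:ℂ))⁻¹ • ∑ k ∈ Finset.range n, f (φ^[k] x)).re
      = ((n:ℝ))⁻¹ * birk φ (fun y => (f y).re) n x := by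
  rw [smul_eq_mul, show ((n:ℂ))⁻¹ = ((((n:ℝ))⁻¹ : ℝ) : ℂ) by
      rw [Complex.ofReal_inv, Complex.ofReal_natCast],
    Complex.re_ofReal_mul]
  congr 1
  exact Complex.re_sum _ _

lemma im_avg (φ : X → X) (f : X → ℂ) (n : ℕ) (x : X) :
    (((n:ℂ))⁻¹ • ∑ k ∈ Finset.range n, f (φ^[k] x)).im
      = ((n:ℝ))⁻¹ * birk φ (fun y => (f y).im) n x := by
  rw [smul_eq_mul, show ((n:ℂ))⁻¹ = ((((n:ℝ))⁻¹ : ℝ) : ℂ) by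
      rw [Complex.ofReal_inv, Complex.ofReal_natCast],
    Complex.im_ofReal_mul]
  congr 1
  exact Complex.im_sum _ _

end Complexify

end MEproof


/-- The Koopman operator of `φ` is mean ergodic on `C(K)`: for every continuous function
`f`, the Cesàro averages `A_n f = (1/n) ∑_{k<n} f ∘ φ^k` converge in the sup norm
(i.e. uniformly) to some function. -/
def MeanErgodic {K : Type*} [TopologicalSpace K] (φ : K → K) : Prop :=
  ∀ f : C(K, ℂ), ∃ g : K → ℂ,
    TendstoUniformly (fun (n : ℕ) (x : K) => (n : ℂ)⁻¹ • ∑ k ∈ Finset.range n, f (φ^[k] x))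
      g atTop

/-- Let `(K, φ)` be a topological dynamical system and `q : K → L` a
projection onto its maximal trivial factor.  Then the Koopman operator `T_φ` is mean ergodic
on `C(K)` if and only if for every `l ∈ L` and every `f ∈ C(K)` there is a constant
`c_l ∈ ℂ` such that the Cesàro averages `A_n f (x)` converge to `c_l` for every `x` in the
fiber `K_l = q⁻¹ {l}`. -/
theorem meanErgodic_iff_fiberwise_cesaro_constant
    {K L : Type*} [TopologicalSpace K] [CompactSpace K] [T2Space K]
    [TopologicalSpace L] [CompactSpace L] [T2Space L]
    (φ : K → K) (hφ : Continuous φ)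
    (q : K → L) (hq : Continuous q) (hqsurj : Function.Surjective q)
    (hmax : ∀ f : C(K, ℂ), (∀ x, f (φ x) = f x) ↔ ∃ g : C(L, ℂ), f = g.comp ⟨q, hq⟩) :
    MeanErgodic φ ↔
      ∀ l : L, ∀ f : C(K, ℂ), ∃ c : ℂ, ∀ x ∈ q ⁻¹' {l},
        Tendsto (fun n : ℕ => (n : ℂ)⁻¹ • ∑ k ∈ Finset.range n, f (φ^[k] x))
          atTop (nhds c) := by
  classical
  constructor
  · -- mean ergodic ⟹ fiberwise constant limits
    intro hme l f
    obtain ⟨g, hg⟩ := hme f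
    have hFcont : ∀ n : ℕ, Continuous fun x : K =>
        (n:ℂ)⁻¹ • ∑ k ∈ Finset.range n, f (φ^[k] x) := fun n =>
      continuous_const.smul (f := fun _ : K => ((n:ℂ))⁻¹) (g := fun x => ∑ k ∈ Finset.range n, f (φ^[k] x)) (continuous_finset_sum _ fun k _ => f.continuous.comp (hφ.iterate k))
    have hgcont : Continuous g := hg.continuous (Filter.Eventually.of_forall hFcont).frequently
    have hgpt : ∀ x : K, Tendsto (fun n : ℕ => (n:ℂ)⁻¹ • ∑ k ∈ Finset.range n, f (φ^[k] x))
        atTop (nhds (g x)) := fun x => hg.tendsto_at x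
    have hginv : ∀ x, g (φ x) = g x := by
      intro x
      have hid : ∀ n : ℕ, (∑ k ∈ Finset.range n, f (φ^[k] (φ x)))
          = (∑ k ∈ Finset.range n, f (φ^[k] x)) + (f (φ^[n] x) - f x) := by
        intro n
        have h2 : ∀ k ∈ Finset.range n, f (φ^[k] (φ x)) = f (φ^[k+1] x) := fun k _ => by
          rw [← Function.iterate_succ_apply]
        rw [Finset.sum_congr rfl h2]
        have h3 := Finset.sum_range_succ' (fun k => f (φ^[k] x)) n
        have h4 := Finset.sum_range_succ (fun k => f (φ^[k] x)) n
        have h5 : φ^[0] x = x := rfl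
        rw [h5] at h3
        calc (∑ k ∈ Finset.range n, f (φ^[k+1] x))
            = (∑ k ∈ Finset.range (n+1), f (φ^[k] x)) - f x := by rw [h3]; ring
          _ = (∑ k ∈ Finset.range n, f (φ^[k] x)) + (f (φ^[n] x) - f x) := by rw [h4]; ring
      have h3 : Tendsto (fun n : ℕ => (n:ℂ)⁻¹ • (f (φ^[n] x) - f x)) atTop (nhds 0) := by
        have hb : ∀ n : ℕ, ‖(n:ℂ)⁻¹ • (f (φ^[n] x) - f x)‖ ≤ ((n:ℝ))⁻¹ * (‖f‖ + ‖f‖) := by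
          intro n
          rw [norm_smul, norm_inv, Complex.norm_natCast]
          refine mul_le_mul_of_nonneg_left ?_ (by positivity)
          exact le_trans (norm_sub_le _ _)
            (add_le_add (f.norm_coe_le_norm _) (f.norm_coe_le_norm _))
        have hlim : Tendsto (fun m : ℕ => ((m:ℝ))⁻¹ * (‖f‖ + ‖f‖)) atTop (nhds 0) := by
          have h8 : Tendsto (fun m : ℕ => ((m:ℝ))⁻¹) atTop (nhds 0) :=
            tendsto_inv_atTop_nhds_zero_nat
          simpa using h8.mul_const (‖f‖ + ‖f‖)
        exact squeeze_zero_norm hb hlim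
      have h6 := (hgpt x).add h3
      rw [add_zero] at h6
      have h7 : Tendsto (fun n : ℕ => (n:ℂ)⁻¹ • ∑ k ∈ Finset.range n, f (φ^[k] (φ x)))
          atTop (nhds (g x)) := by
        refine h6.congr fun n => ?_
        rw [← smul_add, ← hid n]
      exact tendsto_nhds_unique (hgpt (φ x)) h7
    obtain ⟨gl, hgl⟩ := (hmax ⟨g, hgcont⟩).mp hginv
    refine ⟨gl l, fun x hx => ?_⟩
    have hqx : q x = l := hx
    have h7 : g x = gl l := by
      have h8 := congrArg (fun F : C(K,ℂ) => F x) hgl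
      simp only [ContinuousMap.comp_apply, ContinuousMap.coe_mk] at h8
      rw [hqx] at h8
      exact h8
    rw [← h7]
    exact hgpt x
  · -- fiberwise constant limits ⟹ mean ergodic
    intro H f
    have hqφ : ∀ x, q (φ x) = q x := by
      intro x
      by_contra hne
      obtain ⟨fr, h0, h1, -⟩ := exists_continuous_zero_one_of_isClosed
        (isClosed_singleton (x := q (φ x))) (isClosed_singleton (x := q x))
        (Set.disjoint_singleton.mpr hne)
      have hinv := (hmax ((⟨fun l => ((fr l : ℝ) : ℂ),
        Complex.continuous_ofReal.comp fr.continuous⟩ : C(L, ℂ)).comp ⟨q, hq⟩)).mpr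
        ⟨⟨fun l => ((fr l : ℝ) : ℂ), Complex.continuous_ofReal.comp fr.continuous⟩, rfl⟩ x
      simp only [ContinuousMap.comp_apply, ContinuousMap.coe_mk] at hinv
      have h2 : fr (q (φ x)) = fr (q x) := by exact_mod_cast hinv
      have hz := h0 (Set.mem_singleton _)
      have ho := h1 (Set.mem_singleton _)
      simp only [Pi.zero_apply, Pi.one_apply] at hz ho
      rw [hz, ho] at h2
      norm_num at h2
    set cf : L → ℂ := fun l' => (H l' f).choose with hcf
    have hcfun : ∀ x : K, Tendsto (fun n : ℕ => (n:ℂ)⁻¹ • ∑ k ∈ Finset.range n, f (φ^[k] x))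
        atTop (nhds (cf (q x))) := fun x => (H (q x) f).choose_spec x rfl
    have hre := MEproof.real_backward hφ hq hqsurj hqφ (fun x => (f x).re)
      (Complex.continuous_re.comp f.continuous) (fun l' => (cf l').re) (fun x => by
        have h1 := (Complex.continuous_re.tendsto _).comp (hcfun x)
        exact h1.congr fun n => MEproof.re_avg φ (fun y => f y) n x)
    have him := MEproof.real_backward hφ hq hqsurj hqφ (fun x => (f x).im)
      (Complex.continuous_im.comp f.continuous) (fun l' => (cf l').im) (fun x => by
        have h1 := (Complex.continuous_im.tendsto _).comp (hcfun x)
        exact h1.congr fun n => MEproof.im_avg φ (fun y => f y) n x)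
    refine ⟨fun x => cf (q x), ?_⟩
    rw [Metric.tendstoUniformly_iff]
    intro ε hε
    rw [Metric.tendstoUniformly_iff] at hre him
    filter_upwards [hre (ε/2) (by linarith), him (ε/2) (by linarith)] with n h1 h2 x
    have h3 := h1 x
    have h4 := h2 x
    rw [Real.dist_eq] at h3 h4
    rw [Complex.dist_eq]
    have hAre := MEproof.re_avg φ (fun y => f y) n x
    have hAim := MEproof.im_avg φ (fun y => f y) n x
    calc ‖cf (q x) - (n:ℂ)⁻¹ • ∑ k ∈ Finset.range n, f (φ^[k] x)‖
        ≤ |(cf (q x) - (n:ℂ)⁻¹ • ∑ k ∈ Finset.range n, f (φ^[k] x)).re|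
          + |(cf (q x) - (n:ℂ)⁻¹ • ∑ k ∈ Finset.range n, f (φ^[k] x)).im| :=
          Complex.norm_le_abs_re_add_abs_im _
      _ = |(cf (q x)).re - ((n:ℂ)⁻¹ • ∑ k ∈ Finset.range n, f (φ^[k] x)).re|
          + |(cf (q x)).im - ((n:ℂ)⁻¹ • ∑ k ∈ Finset.range n, f (φ^[k] x)).im| := by
          rw [Complex.sub_re, Complex.sub_im]
      _ < ε/2 + ε/2 := by
          rw [hAre, hAim]
          exact add_lt_add h3 h4
      _ = ε := by ring
end

section
/- Let (K, B, p; φ) be a bundle of topological dynamical systems such that every fiber system (K_b, φ_b) is uniquely ergodic. Then every f ∈ C(K) with f ∘ φ = f is constant on each fiber K_b; equivalently, f = g ∘ p for some g ∈ C(B). Consequently p is (up to a canonical homeomorphism of base spaces) the projection onto the maximal trivial factor of (K, φ). -/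
open MeasureTheory

/-- A topological dynamical system is uniquely ergodic if it admits exactly one invariant
regular Borel probability measure. -/
def UniquelyErgodic {S : Type*} [TopologicalSpace S] (ψ : S → S) : Prop :=
  letI : MeasurableSpace S := borel S
  ∃! μ : Measure S, IsProbabilityMeasure μ ∧ μ.Regular ∧ MeasurePreserving ψ μ μ

/-- The restriction of `φ` to the fiber `p⁻¹ {b}`. -/
def fiberMap {K B : Type*} (φ : K → K) (p : K → B) (hinv : ∀ x, p (φ x) = p x) (b : B)
    (x : ↥(p ⁻¹' {b})) : ↥(p ⁻¹' {b}) :=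
  ⟨φ ↑x, by rw [Set.mem_preimage, Set.mem_singleton_iff, hinv]; exact x.2⟩


section KBAux

open Filter Topology Set TopologicalSpace BoundedContinuousFunction
open scoped NNReal ENNReal

set_option linter.unusedSectionVars false

namespace KBAux

noncomputable def UU : Ultrafilter ℕ := Ultrafilter.of Filter.atTop

lemma UU_le_atTop : (UU : Filter ℕ) ≤ Filter.atTop := Ultrafilter.of_le _

variable {S : Type*} [TopologicalSpace S] [CompactSpace S] [T2Space S]

noncomputable def avg (ψ : S → S) (x₀ : S) (g : S →ᵇ ℝ) (n : ℕ) : ℝ :=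
  (n : ℝ)⁻¹ * ∑ k ∈ Finset.range n, g (ψ^[k] x₀)

lemma abs_avg_le (ψ : S → S) (x₀ : S) (g : S →ᵇ ℝ) (n : ℕ) : |avg ψ x₀ g n| ≤ ‖g‖ := by
  have h1 : |∑ k ∈ Finset.range n, g (ψ^[k] x₀)| ≤ n * ‖g‖ := by
    calc |∑ k ∈ Finset.range n, g (ψ^[k] x₀)| ≤ ∑ k ∈ Finset.range n, |g (ψ^[k] x₀)| :=
          Finset.abs_sum_le_sum_abs _ _
      _ ≤ ∑ _k ∈ Finset.range n, ‖g‖ :=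
          Finset.sum_le_sum fun k _ => g.norm_coe_le_norm _
      _ = n * ‖g‖ := by simp [mul_comm]
  rcases Nat.eq_zero_or_pos n with hn | hn
  · simp [avg, hn, norm_nonneg]
  · have hn' : (0:ℝ) < n := by exact_mod_cast hn
    rw [avg, abs_mul, abs_inv, abs_of_nonneg hn'.le]
    calc (n:ℝ)⁻¹ * |∑ k ∈ Finset.range n, g (ψ^[k] x₀)| ≤ (n:ℝ)⁻¹ * (n * ‖g‖) := by
          exact mul_le_mul_of_nonneg_left h1 (by positivity)
      _ = ‖g‖ := by field_simp

lemma exists_tendsto (ψ : S → S) (x₀ : S) (g : S →ᵇ ℝ) :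
    ∃ a : ℝ, Tendsto (avg ψ x₀ g) (UU : Filter ℕ) (𝓝 a) := by
  have hmem : ∀ n, avg ψ x₀ g n ∈ Icc (-‖g‖) ‖g‖ := fun n => abs_le.mp (abs_avg_le ψ x₀ g n)
  obtain ⟨a, -, ha⟩ := (isCompact_Icc (a := -‖g‖) (b := ‖g‖)).ultrafilter_le_nhds
    (UU.map (avg ψ x₀ g)) (by
      rw [Ultrafilter.coe_map, Filter.le_principal_iff]
      exact Filter.mem_map.mpr (Filter.Eventually.of_forall hmem))
  exact ⟨a, by rwa [Ultrafilter.coe_map] at ha⟩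

noncomputable def lim (ψ : S → S) (x₀ : S) (g : S →ᵇ ℝ) : ℝ :=
  (exists_tendsto ψ x₀ g).choose

lemma tendsto_lim (ψ : S → S) (x₀ : S) (g : S →ᵇ ℝ) :
    Tendsto (avg ψ x₀ g) (UU : Filter ℕ) (𝓝 (lim ψ x₀ g)) :=
  (exists_tendsto ψ x₀ g).choose_spec

lemma lim_eq {ψ : S → S} {x₀ : S} {g : S →ᵇ ℝ} {a : ℝ}
    (h : Tendsto (avg ψ x₀ g) (UU : Filter ℕ) (𝓝 a)) : lim ψ x₀ g = a :=
  tendsto_nhds_unique (tendsto_lim ψ x₀ g) h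

variable {ψ : S → S} {x₀ : S}

lemma avg_add (g h : S →ᵇ ℝ) (n : ℕ) :
    avg ψ x₀ (g + h) n = avg ψ x₀ g n + avg ψ x₀ h n := by
  simp [avg, Finset.sum_add_distrib, mul_add]

lemma lim_add (g h : S →ᵇ ℝ) :
    lim ψ x₀ (g + h) = lim ψ x₀ g + lim ψ x₀ h :=
  lim_eq (by
    have := (tendsto_lim ψ x₀ g).add (tendsto_lim ψ x₀ h)
    simpa [← avg_add] using this)

lemma avg_smul (c : ℝ) (g : S →ᵇ ℝ) (n : ℕ) :
    avg ψ x₀ (c • g) n = c * avg ψ x₀ g n := by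
  simp only [avg, coe_smul, Pi.smul_apply, smul_eq_mul, Finset.mul_sum]
  exact Finset.sum_congr rfl fun _ _ => by ring

lemma lim_smul (c : ℝ) (g : S →ᵇ ℝ) : lim ψ x₀ (c • g) = c * lim ψ x₀ g :=
  lim_eq (by
    have := (tendsto_lim ψ x₀ g).const_mul c
    simpa [← avg_smul] using this)

lemma lim_le_lim {g h : S →ᵇ ℝ} (hle : ∀ x, g x ≤ h x) : lim ψ x₀ g ≤ lim ψ x₀ h := by
  refine le_of_tendsto_of_tendsto' (tendsto_lim ψ x₀ g) (tendsto_lim ψ x₀ h) fun n => ?_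
  exact mul_le_mul_of_nonneg_left (Finset.sum_le_sum fun k _ => hle _) (by positivity)

lemma lim_nonneg {g : S →ᵇ ℝ} (hg : ∀ x, 0 ≤ g x) : 0 ≤ lim ψ x₀ g := by
  have h0 : lim ψ x₀ (0 : S →ᵇ ℝ) = 0 :=
    lim_eq (Tendsto.congr (f₁ := fun _ : ℕ => (0:ℝ)) (fun n => by simp [avg]) tendsto_const_nhds)
  have := lim_le_lim (ψ := ψ) (x₀ := x₀) (g := (0 : S →ᵇ ℝ)) (h := g) (by simpa using hg)
  rwa [h0] at this

lemma lim_one : lim ψ x₀ (1 : S →ᵇ ℝ) = 1 := by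
  refine lim_eq (Tendsto.congr' ?_ tendsto_const_nhds)
  have h1 : ∀ᶠ n in (UU : Filter ℕ), 1 ≤ n := UU_le_atTop (eventually_ge_atTop 1)
  filter_upwards [h1] with n hn
  have hn' : (n:ℝ) ≠ 0 := by positivity
  simp [avg, hn']

lemma lim_orbit_zero {g : S →ᵇ ℝ} (h : ∀ n, g (ψ^[n] x₀) = 0) : lim ψ x₀ g = 0 :=
  lim_eq (Tendsto.congr (f₁ := fun _ : ℕ => (0:ℝ)) (fun n => by simp [avg, h]) tendsto_const_nhds)

lemma avg_comp (hψ : Continuous ψ) (g : S →ᵇ ℝ) (n : ℕ) :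
    avg ψ x₀ (g.compContinuous ⟨ψ, hψ⟩) n
      = avg ψ x₀ g n + (n:ℝ)⁻¹ * (g (ψ^[n] x₀) - g x₀) := by
  have key : ∑ k ∈ Finset.range n, g (ψ^[k+1] x₀)
      = (∑ k ∈ Finset.range n, g (ψ^[k] x₀)) + (g (ψ^[n] x₀) - g x₀) := by
    have := Finset.sum_range_succ' (fun k => g (ψ^[k] x₀)) n
    have h2 := Finset.sum_range_succ (fun k => g (ψ^[k] x₀)) n
    rw [h2] at this
    simp only [Function.iterate_zero_apply] at this
    linarith
  simp only [avg, compContinuous_apply, ContinuousMap.coe_mk,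
    ← Function.iterate_succ_apply' ψ]
  simp only [Nat.succ_eq_add_one]
  rw [key, mul_add]

lemma lim_comp (hψ : Continuous ψ) (g : S →ᵇ ℝ) :
    lim ψ x₀ (g.compContinuous ⟨ψ, hψ⟩) = lim ψ x₀ g := by
  have hz : Tendsto (fun n : ℕ => (n:ℝ)⁻¹ * (g (ψ^[n] x₀) - g x₀)) atTop (𝓝 0) := by
    apply squeeze_zero_norm (a := fun n : ℕ => (n:ℝ)⁻¹ * (2 * ‖g‖))
    · intro n
      rw [norm_mul, norm_inv, Real.norm_natCast]
      refine mul_le_mul_of_nonneg_left ?_ (by positivity)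
      calc ‖g (ψ^[n] x₀) - g x₀‖ ≤ ‖g (ψ^[n] x₀)‖ + ‖g x₀‖ := norm_sub_le _ _
        _ ≤ ‖g‖ + ‖g‖ := add_le_add (g.norm_coe_le_norm _) (g.norm_coe_le_norm _)
        _ = 2 * ‖g‖ := by ring
    · have := tendsto_inv_atTop_nhds_zero_nat.mul_const (2 * ‖g‖)
      simpa using this
  have hz' := hz.mono_left UU_le_atTop
  refine lim_eq ?_
  have := (tendsto_lim ψ x₀ g).add hz'
  rw [add_zero] at this
  exact this.congr fun n => (avg_comp hψ g n).symm

/-! ### The positive linear functional on `S →ᵇ ℝ≥0` -/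

noncomputable def toR (f : S →ᵇ ℝ≥0) : S →ᵇ ℝ :=
  BoundedContinuousFunction.mkOfCompact
    ⟨fun x => (f x : ℝ), NNReal.continuous_coe.comp f.continuous⟩

@[simp] lemma toR_apply (f : S →ᵇ ℝ≥0) (x : S) : toR f x = (f x : ℝ) := rfl

noncomputable def Lam (ψ : S → S) (x₀ : S) : (S →ᵇ ℝ≥0) →ₗ[ℝ≥0] ℝ≥0 where
  toFun f := ⟨lim ψ x₀ (toR f), lim_nonneg fun x => (f x).coe_nonneg⟩
  map_add' f g := by
    apply Subtype.ext
    show lim ψ x₀ (toR (f + g)) = lim ψ x₀ (toR f) + lim ψ x₀ (toR g)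
    have h : toR (f + g) = toR f + toR g := by
      ext x; simp
    rw [h, lim_add]
  map_smul' c f := by
    apply Subtype.ext
    show lim ψ x₀ (toR (c • f)) = (c : ℝ) * lim ψ x₀ (toR f)
    have h : toR (c • f) = (c : ℝ) • toR f := by
      ext x; simp [NNReal.smul_def]
    rw [h, lim_smul]

lemma Lam_apply (f : S →ᵇ ℝ≥0) : (Lam ψ x₀ f : ℝ) = lim ψ x₀ (toR f) := rfl

lemma Lam_mono {f g : S →ᵇ ℝ≥0} (h : ∀ x, f x ≤ g x) : Lam ψ x₀ f ≤ Lam ψ x₀ g := by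
  rw [← NNReal.coe_le_coe, Lam_apply, Lam_apply]
  exact lim_le_lim fun x => by exact_mod_cast h x

lemma Lam_one : Lam ψ x₀ (1 : S →ᵇ ℝ≥0) = 1 := by
  apply Subtype.ext
  show lim ψ x₀ (toR 1) = 1
  have : toR (1 : S →ᵇ ℝ≥0) = (1 : S →ᵇ ℝ) := by ext x; simp
  rw [this, lim_one]

noncomputable def compNN (hψ : Continuous ψ) (f : S →ᵇ ℝ≥0) : S →ᵇ ℝ≥0 :=
  BoundedContinuousFunction.mkOfCompact ⟨fun x => f (ψ x), f.continuous.comp hψ⟩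

@[simp] lemma compNN_apply (hψ : Continuous ψ) (f : S →ᵇ ℝ≥0) (x : S) :
    compNN hψ f x = f (ψ x) := rfl

lemma Lam_comp (hψ : Continuous ψ) (f : S →ᵇ ℝ≥0) : Lam ψ x₀ (compNN hψ f) = Lam ψ x₀ f := by
  apply Subtype.ext
  show lim ψ x₀ (toR (compNN hψ f)) = lim ψ x₀ (toR f)
  have : toR (compNN hψ f) = (toR f).compContinuous ⟨ψ, hψ⟩ := by ext x; simp
  rw [this, lim_comp]

noncomputable def ccToB : CompactlySupportedContinuousMap S ℝ≥0 →ₗ[ℝ≥0] (S →ᵇ ℝ≥0) where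
  toFun f := f.toBoundedContinuousFunction
  map_add' f g := by ext x; simp
  map_smul' c f := by ext x; simp

@[simp] lemma ccToB_apply (f : CompactlySupportedContinuousMap S ℝ≥0) (x : S) :
    ccToB f x = f x := rfl

noncomputable def ofB (g : S →ᵇ ℝ≥0) : CompactlySupportedContinuousMap S ℝ≥0 :=
  CompactlySupportedContinuousMap.continuousMapEquiv g.toContinuousMap

noncomputable def LamC (ψ : S → S) (x₀ : S) :
    CompactlySupportedContinuousMap S ℝ≥0 →ₗ[ℝ≥0] ℝ≥0 :=
  (Lam ψ x₀).comp ccToB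

lemma rieszContentAux_le_Lam {K : TopologicalSpace.Compacts S} {f : S →ᵇ ℝ≥0}
    (h : ∀ x ∈ K, (1 : ℝ≥0) ≤ f x) : rieszContentAux (LamC ψ x₀) K ≤ Lam ψ x₀ f := by
  have := rieszContentAux_le (LamC ψ x₀) (f := ofB f) h
  exact this

/-! ### The content and its measure -/

noncomputable def kbContent (ψ : S → S) (hψ : Continuous ψ) (x₀ : S) : Content S where
  toFun := rieszContentAux (LamC ψ x₀)
  mono' K₁ K₂ h := rieszContentAux_mono (LamC ψ x₀) h
  sup_le' := rieszContentAux_sup_le (LamC ψ x₀)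
  sup_disjoint' K₁ K₂ hd _ _ := by
    refine le_antisymm (rieszContentAux_sup_le (LamC ψ x₀) K₁ K₂) ?_
    refine le_csInf (rieszContentAux_image_nonempty (LamC ψ x₀) (K₁ ⊔ K₂)) ?_
    rintro b ⟨f, hf, rfl⟩
    obtain ⟨u, hu0, hu1, huIcc⟩ := exists_continuous_zero_one_of_isCompact'
      K₁.2 K₂.2.isClosed hd
    set f₁ : S →ᵇ ℝ≥0 := BoundedContinuousFunction.mkOfCompact
      ⟨fun x => f x * Real.toNNReal (u x),
       f.continuous.mul (continuous_real_toNNReal.comp u.continuous)⟩ with hf₁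
    set f₂ : S →ᵇ ℝ≥0 := BoundedContinuousFunction.mkOfCompact
      ⟨fun x => f x * Real.toNNReal (1 - u x),
       f.continuous.mul (continuous_real_toNNReal.comp (continuous_const.sub u.continuous))⟩
      with hf₂
    have hsplit : f₁ + f₂ = f := by
      ext x
      have hpt : f₁ x + f₂ x = f x := by
        show f x * Real.toNNReal (u x) + f x * Real.toNNReal (1 - u x) = f x
        rw [← mul_add, ← Real.toNNReal_add (huIcc x).1 (by linarith [(huIcc x).2])]
        simp
      simp only [BoundedContinuousFunction.coe_add, Pi.add_apply]
      exact_mod_cast hpt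
    have h₁ : rieszContentAux (LamC ψ x₀) K₁ ≤ Lam ψ x₀ f₁ := by
      apply rieszContentAux_le_Lam
      intro x hx
      show 1 ≤ f x * Real.toNNReal (u x)
      rw [hu1 hx]
      simp only [Pi.one_apply, Real.toNNReal_one, mul_one]
      exact hf x (Set.mem_union_left _ hx)
    have h₂ : rieszContentAux (LamC ψ x₀) K₂ ≤ Lam ψ x₀ f₂ := by
      apply rieszContentAux_le_Lam
      intro x hx
      show 1 ≤ f x * Real.toNNReal (1 - u x)
      rw [hu0 hx]
      simp only [Pi.zero_apply, sub_zero, Real.toNNReal_one, mul_one]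
      exact hf x (Set.mem_union_right _ hx)
    calc rieszContentAux (LamC ψ x₀) K₁ + rieszContentAux (LamC ψ x₀) K₂
        ≤ Lam ψ x₀ f₁ + Lam ψ x₀ f₂ := add_le_add h₁ h₂
      _ = Lam ψ x₀ (f₁ + f₂) := (map_add _ _ _).symm
      _ = Lam ψ x₀ f := by rw [hsplit]

lemma kbContent_apply (hψ : Continuous ψ) (K : TopologicalSpace.Compacts S) :
    kbContent ψ hψ x₀ K = (rieszContentAux (LamC ψ x₀) K : ℝ≥0∞) := rfl

end KBAux

open KBAux in
/-- **Krylov–Bogolyubov with prescribed support**: a continuous self-map of a compact Hausdorff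
space admits an invariant regular Borel probability measure giving full mass to any closed set
containing the forward orbit of some point. -/
theorem krylov_bogolyubov {S : Type*} [TopologicalSpace S] [CompactSpace S] [T2Space S]
    (ψ : S → S) (hψ : Continuous ψ) (x₀ : S) (M : Set S) (hM : IsClosed M)
    (horb : ∀ n, ψ^[n] x₀ ∈ M) :
    letI : MeasurableSpace S := borel S
    ∃ μ : Measure S, IsProbabilityMeasure μ ∧ μ.Regular ∧ MeasurePreserving ψ μ μ ∧ μ Mᶜ = 0 := by
  letI : MeasurableSpace S := borel S
  haveI : BorelSpace S := ⟨rfl⟩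
  set C := kbContent ψ hψ x₀ with hC
  have hopenval : ∀ (U : Set S) (hU : IsOpen U),
      C.measure U = C.innerContent ⟨U, hU⟩ := by
    intro U hU
    rw [C.measure_apply hU.measurableSet]
    exact C.outerMeasure_opens ⟨U, hU⟩
  have hcontent_le_one : ∀ K : TopologicalSpace.Compacts S,
      rieszContentAux (LamC ψ x₀) K ≤ 1 := by
    intro K
    have := rieszContentAux_le_Lam (ψ := ψ) (x₀ := x₀) (K := K) (f := 1) (fun x _ => le_refl _)
    rwa [Lam_one] at this
  have hprob : IsProbabilityMeasure C.measure := by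
    constructor
    rw [hopenval Set.univ isOpen_univ]
    apply le_antisymm
    · refine iSup₂_le fun K _ => ?_
      have h1 := hcontent_le_one K
      show ((rieszContentAux (LamC ψ x₀) K : ℝ≥0) : ℝ≥0∞) ≤ 1
      exact_mod_cast h1
    · refine le_trans ?_ (C.le_innerContent ⟨Set.univ, isCompact_univ⟩
        ⟨Set.univ, isOpen_univ⟩ subset_rfl)
      show (1 : ℝ≥0∞) ≤ ((rieszContentAux (LamC ψ x₀) ⟨Set.univ, isCompact_univ⟩ : ℝ≥0) : ℝ≥0∞)
      rw [ENNReal.one_le_coe_iff]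
      refine le_csInf (rieszContentAux_image_nonempty _ _) ?_
      rintro b ⟨f, hf, rfl⟩
      calc (1:ℝ≥0) = Lam ψ x₀ 1 := Lam_one.symm
        _ ≤ Lam ψ x₀ f := Lam_mono fun x => hf x trivial
  haveI := hprob
  refine ⟨C.measure, hprob, C.regular, ?_, ?_⟩
  · -- measure preserving
    have hopen : ∀ U : Set S, IsOpen U → C.measure (ψ ⁻¹' U) ≤ C.measure U := by
      intro U hU
      rw [hopenval U hU, hopenval (ψ ⁻¹' U) (hU.preimage hψ)]
      refine iSup₂_le fun K hK => ?_
      have himg : rieszContentAux (LamC ψ x₀) K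
          ≤ rieszContentAux (LamC ψ x₀) ⟨ψ '' K, K.2.image hψ⟩ := by
        refine le_csInf (rieszContentAux_image_nonempty _ _) ?_
        rintro b ⟨f, hf, rfl⟩
        rw [show LamC ψ x₀ f = Lam ψ x₀ (ccToB f) from rfl, ← Lam_comp (x₀ := x₀) hψ (ccToB f)]
        exact rieszContentAux_le_Lam (fun x hx => by
          simpa using hf (ψ x) ⟨x, hx, rfl⟩)
      calc ((rieszContentAux (LamC ψ x₀) K : ℝ≥0) : ℝ≥0∞)
          ≤ ((rieszContentAux (LamC ψ x₀) ⟨ψ '' K, K.2.image hψ⟩ : ℝ≥0) : ℝ≥0∞) := by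
            exact_mod_cast himg
        _ ≤ _ := C.le_innerContent ⟨ψ '' K, K.2.image hψ⟩ ⟨U, hU⟩
            (Set.image_subset_iff.mpr hK)
    have hle : ∀ A : Set S, MeasurableSet A → C.measure (ψ ⁻¹' A) ≤ C.measure A := by
      intro A hA
      rw [Set.measure_eq_iInf_isOpen A C.measure]
      refine le_iInf fun U => le_iInf fun hAU => le_iInf fun hU => ?_
      exact (measure_mono (Set.preimage_mono hAU)).trans (hopen U hU)
    refine ⟨hψ.measurable, Measure.ext fun A hA => ?_⟩
    rw [Measure.map_apply hψ.measurable hA]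
    by_contra hne
    have hlt : C.measure (ψ ⁻¹' A) < C.measure A := lt_of_le_of_ne (hle A hA) hne
    have h2 : C.measure (ψ ⁻¹' A)ᶜ ≤ C.measure Aᶜ := by
      have := hle Aᶜ hA.compl
      rwa [Set.preimage_compl] at this
    have e1 : C.measure (ψ ⁻¹' A) + C.measure (ψ ⁻¹' A)ᶜ = 1 := by
      simpa using measure_add_measure_compl (μ := C.measure) (hψ.measurable hA)
    have e2 : C.measure A + C.measure Aᶜ = 1 := by
      simpa using measure_add_measure_compl (μ := C.measure) hA
    have : (1:ℝ≥0∞) < 1 := by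
      calc (1:ℝ≥0∞) = C.measure (ψ ⁻¹' A) + C.measure (ψ ⁻¹' A)ᶜ := e1.symm
        _ < C.measure A + C.measure Aᶜ :=
          ENNReal.add_lt_add_of_lt_of_le (measure_ne_top _ _) hlt h2
        _ = 1 := e2
    exact absurd this (lt_irrefl _)
  · -- support
    rw [hopenval Mᶜ hM.isOpen_compl]
    refine le_antisymm (iSup₂_le fun K hK => ?_) (by simp)
    obtain ⟨u, hu0, hu1, huIcc⟩ := exists_continuous_zero_one_of_isCompact' K.2 hM
      (Set.disjoint_left.mpr fun {a} ha haM => (hK ha : a ∈ Mᶜ) haM)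
    set f₀ : S →ᵇ ℝ≥0 := BoundedContinuousFunction.mkOfCompact
      ⟨fun x => Real.toNNReal (u x), continuous_real_toNNReal.comp u.continuous⟩ with hf₀
    have hle : rieszContentAux (LamC ψ x₀) K ≤ Lam ψ x₀ f₀ := by
      apply rieszContentAux_le_Lam
      intro x hx
      show 1 ≤ Real.toNNReal (u x)
      rw [hu1 hx]
      simp
    have h0 : Lam ψ x₀ f₀ = 0 := by
      apply Subtype.ext
      show lim ψ x₀ (toR f₀) = 0
      refine lim_orbit_zero fun n => ?_
      have hz : u (ψ^[n] x₀) = 0 := hu0 (horb n)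
      simp [hf₀, hz]
    have hfin : rieszContentAux (LamC ψ x₀) K ≤ 0 := hle.trans_eq h0
    show ((rieszContentAux (LamC ψ x₀) K : ℝ≥0) : ℝ≥0∞) ≤ 0
    exact_mod_cast hfin

end KBAux

/-- Let `(K, B, p; φ)` be a bundle of topological dynamical systems with all
fiber systems `(K_b, φ_b)` uniquely ergodic.  Then every `f ∈ C(K)` with `f ∘ φ = f` is
constant on each fiber, equivalently of the form `g ∘ p` with `g ∈ C(B)`; consequently
`{g ∘ p : g ∈ C(B)} = fix(T_φ)`, i.e. `p` is the projection onto the maximal trivial factor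
of `(K, φ)`. -/
theorem fixed_functions_factor_of_uniquelyErgodic_fibers
    {K B : Type*} [TopologicalSpace K] [CompactSpace K] [T2Space K]
    [TopologicalSpace B] [CompactSpace B] [T2Space B]
    (φ : K → K) (hφ : Continuous φ)
    (p : K → B) (hp : Continuous p) (hpsurj : Function.Surjective p)
    (hinv : ∀ x, p (φ x) = p x)
    (hue : ∀ b : B, UniquelyErgodic (fiberMap φ p hinv b)) :
    (∀ f : C(K, ℂ), (∀ x, f (φ x) = f x) →
        (∀ x y : K, p x = p y → f x = f y)) ∧
      (∀ f : C(K, ℂ), (∀ x, f (φ x) = f x) ↔ ∃ g : C(B, ℂ), f = g.comp ⟨p, hp⟩) := by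
  have key : ∀ f : C(K, ℂ), (∀ x, f (φ x) = f x) → ∀ x y : K, p x = p y → f x = f y := by
    intro f hf x y hxy
    by_contra hne
    set b := p x with hb
    set S := ↥(p ⁻¹' {b}) with hS
    haveI : CompactSpace S :=
      isCompact_iff_compactSpace.mp ((isClosed_singleton.preimage hp).isCompact)
    set ψ : S → S := fiberMap φ p hinv b with hψdef
    have hψc : Continuous ψ := Continuous.subtype_mk (hφ.comp continuous_subtype_val) _
    letI : MeasurableSpace S := borel S
    haveI : BorelSpace S := ⟨rfl⟩
    have hx' : x ∈ p ⁻¹' {b} := rfl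
    have hy' : y ∈ p ⁻¹' {b} := by
      simp only [Set.mem_preimage, Set.mem_singleton_iff, hb]
      exact hxy.symm
    have hψval : ∀ s : S, (↑(ψ s) : K) = φ ↑s := fun s => rfl
    have horb : ∀ (z : S) (n : ℕ), f ↑(ψ^[n] z) = f ↑z := by
      intro z n
      induction n with
      | zero => rfl
      | succ n ih =>
        rw [Function.iterate_succ_apply', hψval, hf, ih]
    have hMclosed : ∀ c : ℂ, IsClosed {s : S | f ↑s = c} := fun c =>
      isClosed_eq (f.continuous.comp continuous_subtype_val) continuous_const
    obtain ⟨μ₁, hp₁, hr₁, hm₁, hs₁⟩ := krylov_bogolyubov ψ hψc ⟨x, hx'⟩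
      {s : S | f ↑s = f x} (hMclosed _) (fun n => by
        show f ↑(ψ^[n] (⟨x, hx'⟩ : S)) = f x
        rw [horb])
    obtain ⟨μ₂, hp₂, hr₂, hm₂, hs₂⟩ := krylov_bogolyubov ψ hψc ⟨y, hy'⟩
      {s : S | f ↑s = f y} (hMclosed _) (fun n => by
        show f ↑(ψ^[n] (⟨y, hy'⟩ : S)) = f y
        rw [horb])
    have h' := hue b
    rw [UniquelyErgodic] at h'
    obtain ⟨μ₀, hμ₀, huniq⟩ := h'
    have h1 : μ₁ = μ₀ := huniq μ₁ ⟨hp₁, hr₁, hm₁⟩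
    have h2 : μ₂ = μ₀ := huniq μ₂ ⟨hp₂, hr₂, hm₂⟩
    have hM₂meas : MeasurableSet {s : S | f ↑s = f y} := (hMclosed (f y)).measurableSet
    have hv1 : μ₂ {s : S | f ↑s = f y} = 1 := by
      haveI := hp₂
      have := measure_add_measure_compl (μ := μ₂) hM₂meas
      rw [hs₂, add_zero, measure_univ] at this
      exact this
    have hv0 : μ₁ {s : S | f ↑s = f y} = 0 := by
      refine measure_mono_null ?_ hs₁
      intro s hs
      simp only [Set.mem_setOf_eq] at hs
      simp only [Set.mem_compl_iff, Set.mem_setOf_eq]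
      intro hsx
      exact hne (hsx ▸ hs ▸ rfl)
    rw [h1, ← h2, hv1] at hv0
    exact one_ne_zero hv0
  refine ⟨key, fun f => ⟨fun hf => ?_, ?_⟩⟩
  · have hconst := key f hf
    have hcycle : ∀ z : K, f ((hpsurj (p z)).choose) = f z := fun z =>
      hconst _ _ ((hpsurj (p z)).choose_spec)
    have hquot : Topology.IsQuotientMap p := (hp.isClosedMap).isQuotientMap hp hpsurj
    have hcq : Continuous fun b => f (hpsurj b).choose := by
      rw [hquot.continuous_iff]
      have : (fun b => f (hpsurj b).choose) ∘ p = f := funext fun z => hcycle z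
      rw [this]
      exact f.continuous
    exact ⟨⟨_, hcq⟩, ContinuousMap.ext fun z => (hcycle z).symm⟩
  · rintro ⟨g, rfl⟩ z
    exact congrArg g (hinv z)
end

section
/- Let X be a locally compact Hausdorff space, Y a Hausdorff uniform space, B a compact Hausdorff space, and F : B → 𝒫(X) a set-valued map that is lower-semicontinuous at every point of B. Endow C(X, Y) with the topology of uniform convergence on compact sets and let A ⊆ C(X, Y) be compact. Define the equivalence relation ∼_F on C(X, Y) × B by (f, b) ∼_F (g, b') iff b = b' and f agrees with g on F(b). Then the restriction of ∼_F to A × B is a closed subset of (A × B) × (A × B), and consequently the quotient space (A × B)/∼_F is compact Hausdorff. -/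
/-- A set-valued map `F : B → 𝒫(X)` is lower-semicontinuous at every point if for each
`b ∈ B` and each open `U ⊆ X` meeting `F b` there is a neighborhood `V` of `b` such that
`F b'` meets `U` for all `b' ∈ V`. -/
def LowerSemicontinuousSetMap {B X : Type*} [TopologicalSpace B] [TopologicalSpace X]
    (F : B → Set X) : Prop :=
  ∀ b : B, ∀ U : Set X, IsOpen U → (F b ∩ U).Nonempty →
    ∀ᶠ b' in nhds b, (F b' ∩ U).Nonempty

/-- Let `X` be a locally compact Hausdorff space, `Y` a Hausdorff uniform
space, `B` a compact Hausdorff space and `F : B → 𝒫(X)` lower-semicontinuous.  Endow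
`C(X, Y)` with the topology of uniform convergence on compact sets (the compact-open
topology) and let `A ⊆ C(X, Y)` be compact.  Then the relation
`(f, b) ∼_F (g, b') ↔ b = b' ∧ f = g on F b` restricted to `A × B` is closed, and the
quotient `(A × B) / ∼_F` is compact Hausdorff. -/
theorem quotient_by_fiber_agreement_compact
    {X Y B : Type*} [TopologicalSpace X] [LocallyCompactSpace X] [T2Space X]
    [UniformSpace Y] [T2Space Y]
    [TopologicalSpace B] [CompactSpace B] [T2Space B]
    (F : B → Set X) (hF : LowerSemicontinuousSetMap F)
    (A : Set C(X, Y)) (hA : IsCompact A) :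
    IsClosed {z : (↥A × B) × (↥A × B) |
        z.1.2 = z.2.2 ∧ Set.EqOn (↑z.1.1 : X → Y) (↑z.2.1 : X → Y) (F z.1.2)} ∧
      ∀ s : Setoid (↥A × B),
        (∀ a b : ↥A × B, s.r a b ↔
          (a.2 = b.2 ∧ Set.EqOn (↑a.1 : X → Y) (↑b.1 : X → Y) (F a.2))) →
        CompactSpace (Quotient s) ∧ T2Space (Quotient s) := by
  haveI : CompactSpace ↥A := isCompact_iff_compactSpace.mp hA
  have key : IsClosed {z : (↥A × B) × (↥A × B) |
      z.1.2 = z.2.2 ∧ Set.EqOn (↑z.1.1 : X → Y) (↑z.2.1 : X → Y) (F z.1.2)} := by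
    rw [← isOpen_compl_iff, isOpen_iff_mem_nhds]
    rintro ⟨⟨f, b⟩, ⟨g, b'⟩⟩ hz
    simp only [Set.mem_compl_iff, Set.mem_setOf_eq, not_and] at hz
    by_cases hbb : b = b'
    · subst hbb
      have hne := hz rfl
      rw [Set.EqOn] at hne; push_neg at hne
      obtain ⟨x, hxF, hfg⟩ := hne
      obtain ⟨V, hV, hxyV⟩ : ∃ V ∈ uniformity Y, ((f : C(X, Y)) x, (g : C(X, Y)) x) ∉ V := by
        by_contra h; push_neg at h
        exact hfg (eq_of_uniformity fun hV => h _ hV)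
      obtain ⟨E1, hE1, hE1symm, hE1V⟩ := comp_symm_mem_uniformity_sets hV
      obtain ⟨E, hE, hEsymm, hEE1⟩ := comp_symm_mem_uniformity_sets hE1
      -- an open neighborhood of x where both f and g stay E-close to their values at x
      have hWf : (fun x' => ((f : C(X, Y)) x, (f : C(X, Y)) x')) ⁻¹' E ∈ nhds x :=
        ((f : C(X, Y)).continuous.continuousAt).preimage_mem_nhds
          (UniformSpace.ball_mem_nhds _ hE)
      have hWg : (fun x' => ((g : C(X, Y)) x, (g : C(X, Y)) x')) ⁻¹' E ∈ nhds x :=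
        ((g : C(X, Y)).continuous.continuousAt).preimage_mem_nhds
          (UniformSpace.ball_mem_nhds _ hE)
      obtain ⟨K, hKnhds, hKW, hKcomp⟩ :=
        LocallyCompactSpace.local_compact_nhds x _ (Filter.inter_mem hWf hWg)
      have hev : ∀ᶠ b'' in nhds b, (F b'' ∩ interior K).Nonempty :=
        hF b (interior K) isOpen_interior ⟨x, hxF, mem_interior_iff_mem_nhds.mpr hKnhds⟩
      have h1f : ∀ᶠ f' in nhds (f : C(X, Y)), ∀ y ∈ K, ((f : C(X, Y)) y, f' y) ∈ E :=
        (ContinuousMap.tendsto_iff_forall_isCompact_tendstoUniformlyOn.mp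
          (Filter.tendsto_id (x := nhds (f : C(X, Y))))) K hKcomp E hE
      have h1g : ∀ᶠ g' in nhds (g : C(X, Y)), ∀ y ∈ K, ((g : C(X, Y)) y, g' y) ∈ E :=
        (ContinuousMap.tendsto_iff_forall_isCompact_tendstoUniformlyOn.mp
          (Filter.tendsto_id (x := nhds (g : C(X, Y))))) K hKcomp E hE
      have cf : Continuous (fun w : (↥A × B) × (↥A × B) => (w.1.1 : C(X, Y))) :=
        continuous_subtype_val.comp (continuous_fst.comp continuous_fst)
      have cg : Continuous (fun w : (↥A × B) × (↥A × B) => (w.2.1 : C(X, Y))) :=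
        continuous_subtype_val.comp (continuous_fst.comp continuous_snd)
      have cb : Continuous (fun w : (↥A × B) × (↥A × B) => w.1.2) :=
        continuous_snd.comp continuous_fst
      have evf := (cf.continuousAt (x := ((f, b), (g, b)))).eventually h1f
      have evg := (cg.continuousAt (x := ((f, b), (g, b)))).eventually h1g
      have evb := (cb.continuousAt (x := ((f, b), (g, b)))).eventually hev
      filter_upwards [evf, evg, evb] with w h1 h2 h3
      rintro ⟨-, hEqOn⟩
      obtain ⟨x', hx'F, hx'K⟩ := h3
      have hx'mem : x' ∈ K := interior_subset hx'K
      have hW := hKW hx'mem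
      have hff' : ((f : C(X, Y)) x, (w.1.1 : C(X, Y)) x') ∈ E1 :=
        hEE1 ⟨(f : C(X, Y)) x', hW.1, h1 x' hx'mem⟩
      have heq : (w.1.1 : C(X, Y)) x' = (w.2.1 : C(X, Y)) x' := hEqOn hx'F
      have hg'g : ((w.1.1 : C(X, Y)) x', (g : C(X, Y)) x) ∈ E1 := by
        refine hEE1 ⟨(g : C(X, Y)) x', ?_, ?_⟩
        · rw [heq]; exact hEsymm.symm _ _ (h2 x' hx'mem)
        · exact hEsymm.symm _ _ hW.2
      exact hxyV (hE1V ⟨(w.1.1 : C(X, Y)) x', hff', hg'g⟩)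
    · have hc : Continuous (fun w : (↥A × B) × (↥A × B) => (w.1.2, w.2.2)) :=
        (continuous_snd.comp continuous_fst).prodMk (continuous_snd.comp continuous_snd)
      have hmem : ((b : B), b') ∈ (Set.diagonal B)ᶜ := fun h => hbb h
      have ev := (hc.continuousAt (x := ((f, b), (g, b')))).eventually
        (isClosed_diagonal.isOpen_compl.eventually_mem hmem)
      filter_upwards [ev] with w hw
      rintro ⟨h, -⟩
      exact hw h
  refine ⟨key, fun s hs => ?_⟩
  have hScl : IsClosed {z : (↥A × B) × (↥A × B) | s.r z.1 z.2} := by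
    have : {z : (↥A × B) × (↥A × B) | s.r z.1 z.2} = {z : (↥A × B) × (↥A × B) |
        z.1.2 = z.2.2 ∧ Set.EqOn (↑z.1.1 : X → Y) (↑z.2.1 : X → Y) (F z.1.2)} := by
      ext z; exact hs z.1 z.2
    rw [this]; exact key
  refine ⟨inferInstance, ?_⟩
  have hmkr : ∀ a c : ↥A × B, Quotient.mk s a = Quotient.mk s c ↔ s.r a c := fun a c =>
    ⟨fun h => Quotient.exact h, fun h => Quotient.sound h⟩
  have hqcont : Continuous (Quotient.mk s) := continuous_quotient_mk'
  have hqm : Topology.IsQuotientMap (Quotient.mk s) := isQuotientMap_quot_mk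
  have hclosed : IsClosedMap (Quotient.mk s) := by
    intro C hC
    rw [← hqm.isClosed_preimage]
    have himg : Quotient.mk s ⁻¹' (Quotient.mk s '' C) =
        Prod.fst '' ({z : (↥A × B) × (↥A × B) | s.r z.1 z.2} ∩ (Set.univ ×ˢ C)) := by
      ext z
      constructor
      · rintro ⟨c, hcC, hc⟩
        exact ⟨(z, c), ⟨(hmkr z c).mp hc.symm, Set.mem_univ _, hcC⟩, rfl⟩
      · rintro ⟨⟨a, c⟩, ⟨hr, -, hcC⟩, rfl⟩
        exact ⟨c, hcC, ((hmkr _ c).mpr hr).symm⟩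
    rw [himg]
    exact isClosedMap_fst_of_compactSpace _ (hScl.inter (isClosed_univ.prod hC))
  have hfibers : ∀ y, IsCompact (Quotient.mk s ⁻¹' {y}) := by
    intro y
    obtain ⟨a, rfl⟩ := Quotient.exists_rep y
    have : Quotient.mk s ⁻¹' {Quotient.mk s a} =
        (fun z : ↥A × B => (z, a)) ⁻¹' {z : (↥A × B) × (↥A × B) | s.r z.1 z.2} := by
      ext z; simp only [Set.mem_preimage, Set.mem_singleton_iff, Set.mem_setOf_eq]
      exact hmkr z a
    rw [this]
    exact (hScl.preimage (continuous_id.prodMk continuous_const)).isCompact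
  have hproper : IsProperMap (Quotient.mk s) :=
    isProperMap_iff_isClosedMap_and_compact_fibers.mpr ⟨hqcont, hclosed, hfibers⟩
  have hsurj : Function.Surjective (Quotient.mk s) := Quotient.exists_rep
  have hqq : Topology.IsQuotientMap (Prod.map (Quotient.mk s) (Quotient.mk s)) :=
    (hproper.prodMap hproper).isClosedMap.isQuotientMap
      (hqcont.prodMap hqcont) (hsurj.prodMap hsurj)
  rw [t2_iff_isClosed_diagonal, ← hqq.isClosed_preimage]
  have : Prod.map (Quotient.mk s) (Quotient.mk s) ⁻¹' Set.diagonal (Quotient s) =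
      {z : (↥A × B) × (↥A × B) | s.r z.1 z.2} := by
    ext z
    simp only [Set.mem_preimage, Prod.map, Set.mem_diagonal_iff, Set.mem_setOf_eq]
    exact hmkr z.1 z.2
  rw [this]
  exact hScl
end

section
/- Let (K, B, p; φ) be a bundle of topological dynamical systems such that (K, φ) is equicontinuous and p is an open map. Define the equivalence relation ∼ on E(K, φ) × B by (ψ, b) ∼ (ψ', b') iff b = b' and ψ agrees with ψ' on the fiber K_b. Then ∼ is a closed relation and the quotient space (E(K, φ) × B)/∼ (which is the underlying space of the Ellis semigroup bundle of (K, B, p; φ)) is compact Hausdorff. -/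
open Topology Filter Uniformity

/-- The Ellis semigroup of a topological dynamical system: the closure of `{φ^n : n ∈ ℕ}` in
`K → K` with the product (pointwise-convergence) topology. -/
def Ellis {K : Type*} [TopologicalSpace K] (φ : K → K) : Set (K → K) :=
  closure {ψ : K → K | ∃ n : ℕ, ψ = φ^[n]}

/-- The quotient of a compact Hausdorff space by a closed equivalence relation is Hausdorff. -/
theorem t2_quotient_of_isClosed_rel {X : Type*} [TopologicalSpace X] [CompactSpace X] [T2Space X]
    (s : Setoid X) (hR : IsClosed {z : X × X | s.r z.1 z.2}) :
    T2Space (Quotient s) := by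
  have hsat : ∀ C : Set X, IsClosed C →
      IsClosed (Quotient.mk s ⁻¹' (Quotient.mk s '' C)) := by
    intro C hC
    have heq : Quotient.mk s ⁻¹' (Quotient.mk s '' C)
        = Prod.fst '' ({z : X × X | s.r z.1 z.2} ∩ Set.univ ×ˢ C) := by
      ext x
      constructor
      · rintro ⟨y, hyC, hxy⟩
        exact ⟨(x, y), ⟨s.symm (Quotient.eq.mp hxy), Set.mem_univ _, hyC⟩, rfl⟩
      · rintro ⟨⟨x', y⟩, ⟨hr, -, hyC⟩, rfl⟩
        exact ⟨y, hyC, Quotient.sound (s.symm hr)⟩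
    rw [heq]
    exact (((hR.inter (isClosed_univ.prod hC)).isCompact).image continuous_fst).isClosed
  have hclosedMap : IsClosedMap (Quotient.mk s) := by
    intro C hC
    rw [← isQuotientMap_quotient_mk'.isClosed_preimage]
    exact hsat C hC
  have hclass : ∀ x : X, IsClosed {y | s.r y x} := fun x =>
    hR.preimage (continuous_id.prodMk continuous_const)
  refine ⟨fun a b hab => ?_⟩
  obtain ⟨x, rfl⟩ := Quotient.exists_rep a
  obtain ⟨y, rfl⟩ := Quotient.exists_rep b
  have hnr : ¬ s.r x y := fun h => hab (Quotient.sound h)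
  have hdisj : Disjoint {z | s.r z x} {z | s.r z y} := by
    rw [Set.disjoint_left]
    intro z h1 h2
    exact hnr (s.trans (s.symm h1) h2)
  obtain ⟨U, V, hUo, hVo, hCU, hCV, hUV⟩ :=
    SeparatedNhds.of_isCompact_isCompact (hclass x).isCompact (hclass y).isCompact hdisj
  refine ⟨(Quotient.mk s '' Uᶜ)ᶜ, (Quotient.mk s '' Vᶜ)ᶜ,
    (hclosedMap _ hUo.isClosed_compl).isOpen_compl,
    (hclosedMap _ hVo.isClosed_compl).isOpen_compl, ?_, ?_, ?_⟩
  · rintro ⟨z, hz, hzx⟩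
    exact hz (hCU (Quotient.exact hzx))
  · rintro ⟨z, hz, hzy⟩
    exact hz (hCV (Quotient.exact hzy))
  · rw [Set.disjoint_left]
    intro c hc1 hc2
    obtain ⟨z, rfl⟩ := Quotient.exists_rep c
    have hzU : z ∈ U := by
      by_contra h
      exact hc1 ⟨z, h, rfl⟩
    have hzV : z ∈ V := by
      by_contra h
      exact hc2 ⟨z, h, rfl⟩
    exact (Set.disjoint_left.mp hUV) hzU hzV

/-- Let `(K, B, p; φ)` be a bundle of topological dynamical systems with
`(K, φ)` equicontinuous and `p` an open map.  Then the relation on `E(K, φ) × B` given by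
`(ψ, b) ∼ (ψ', b') ↔ b = b' ∧ ψ = ψ' on K_b` is closed and the quotient
`(E(K, φ) × B) / ∼` (the underlying space of the Ellis semigroup bundle) is compact
Hausdorff. -/
theorem ellisBundle_compact
    {K B : Type*} [UniformSpace K] [CompactSpace K] [T2Space K]
    [TopologicalSpace B] [CompactSpace B] [T2Space B]
    (φ : K → K) (hφ : Continuous φ)
    (p : K → B) (hp : Continuous p) (hpsurj : Function.Surjective p)
    (hinv : ∀ x, p (φ x) = p x)
    (hequi : UniformEquicontinuous fun n : ℕ => φ^[n])
    (hopen : IsOpenMap p) :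
    IsClosed {z : (↥(Ellis φ) × B) × (↥(Ellis φ) × B) |
        z.1.2 = z.2.2 ∧
          Set.EqOn (↑z.1.1 : K → K) (↑z.2.1 : K → K) (p ⁻¹' {z.1.2})} ∧
      ∀ s : Setoid (↥(Ellis φ) × B),
        (∀ a b : ↥(Ellis φ) × B, s.r a b ↔
          (a.2 = b.2 ∧ Set.EqOn (↑a.1 : K → K) (↑b.1 : K → K) (p ⁻¹' {a.2}))) →
        CompactSpace (Quotient s) ∧ T2Space (Quotient s) := by
  have hEq : Set.Equicontinuous (Ellis φ) := by
    have h1 : Equicontinuous fun n : ℕ => φ^[n] := hequi.equicontinuous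
    have hr : Set.range (fun n : ℕ => φ^[n]) = {ψ : K → K | ∃ n : ℕ, ψ = φ^[n]} := by
      ext ψ; simp [Set.range, eq_comm]
    have h2 : Set.Equicontinuous {ψ : K → K | ∃ n : ℕ, ψ = φ^[n]} := by
      intro x
      have := equicontinuousAt_iff_range.mp (h1 x)
      rwa [hr] at this
    exact h2.closure
  have hclosed : IsClosed {z : (↥(Ellis φ) × B) × (↥(Ellis φ) × B) |
      z.1.2 = z.2.2 ∧
        Set.EqOn (↑z.1.1 : K → K) (↑z.2.1 : K → K) (p ⁻¹' {z.1.2})} := by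
    apply isClosed_of_closure_subset
    rintro ⟨⟨ψ, b⟩, ⟨ψ', b'⟩⟩ hz
    have hb : b = b' := by
      have hcl : IsClosed {w : (↥(Ellis φ) × B) × (↥(Ellis φ) × B) | w.1.2 = w.2.2} :=
        isClosed_eq (continuous_snd.comp continuous_fst) (continuous_snd.comp continuous_snd)
      exact closure_minimal (fun w hw => hw.1) hcl hz
    refine ⟨hb, ?_⟩
    intro x hx
    have hpx : p x = b := hx
    apply eq_of_uniformity (α := K)
    intro V hV
    obtain ⟨t, htU, htsymm, htV⟩ := comp_symm_mem_uniformity_sets hV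
    obtain ⟨w, hwU, hwsymm, hwt⟩ := comp_symm_mem_uniformity_sets htU
    have hec : {y : K | ∀ f : ↥(Ellis φ), ((f : K → K) x, (f : K → K) y) ∈ w} ∈ 𝓝 x :=
      hEq x w hwU
    set O := interior {y : K | ∀ f : ↥(Ellis φ), ((f : K → K) x, (f : K → K) y) ∈ w} with hO
    have hxO : x ∈ O := mem_interior_iff_mem_nhds.mpr hec
    have hbO : b ∈ p '' O := ⟨x, hxO, hpx⟩
    have hN : {w' : (↥(Ellis φ) × B) × (↥(Ellis φ) × B) |
        w'.1.2 ∈ p '' O ∧ ((ψ : K → K) x, (w'.1.1 : K → K) x) ∈ w ∧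
          ((ψ' : K → K) x, (w'.2.1 : K → K) x) ∈ w} ∈
        𝓝 ((⟨ψ, b⟩, ⟨ψ', b'⟩) : (↥(Ellis φ) × B) × (↥(Ellis φ) × B)) := by
      have c1 : Continuous fun w' : (↥(Ellis φ) × B) × (↥(Ellis φ) × B) => w'.1.2 :=
        continuous_snd.comp continuous_fst
      have c2 : Continuous fun w' : (↥(Ellis φ) × B) × (↥(Ellis φ) × B) =>
          (w'.1.1 : K → K) x :=
        (continuous_apply x).comp
          (continuous_subtype_val.comp (continuous_fst.comp continuous_fst))
      have c3 : Continuous fun w' : (↥(Ellis φ) × B) × (↥(Ellis φ) × B) =>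
          (w'.2.1 : K → K) x :=
        (continuous_apply x).comp
          (continuous_subtype_val.comp (continuous_fst.comp continuous_snd))
      refine Filter.inter_mem (c1.continuousAt.preimage_mem_nhds
        ((hopen O isOpen_interior).mem_nhds hbO)) (Filter.inter_mem ?_ ?_)
      · exact c2.continuousAt.preimage_mem_nhds (UniformSpace.ball_mem_nhds _ hwU)
      · exact c3.continuousAt.preimage_mem_nhds (UniformSpace.ball_mem_nhds _ hwU)
    obtain ⟨⟨⟨g, c⟩, ⟨g', c'⟩⟩, ⟨hcO, hgx, hg'x⟩, hcc', hEqOn⟩ :=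
      mem_closure_iff_nhds.mp hz _ hN
    obtain ⟨y, hyO, hpy⟩ := hcO
    have hy : ∀ f : ↥(Ellis φ), ((f : K → K) x, (f : K → K) y) ∈ w := interior_subset hyO
    have hgy : (g : K → K) y = (g' : K → K) y := hEqOn (show p y ∈ ({c} : Set B) from hpy)
    have l1 : ((ψ : K → K) x, (g : K → K) y) ∈ t := hwt ⟨(g : K → K) x, hgx, hy g⟩
    have l2 : ((g' : K → K) y, (ψ' : K → K) x) ∈ t :=
      hwt ⟨(g' : K → K) x, hwsymm.symm _ _ (hy g'), hwsymm.symm _ _ hg'x⟩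
    exact htV ⟨(g : K → K) y, l1, hgy ▸ l2⟩
  refine ⟨hclosed, fun s hs => ?_⟩
  have hcompE : CompactSpace ↥(Ellis φ) :=
    isCompact_iff_compactSpace.mp (isClosed_closure.isCompact)
  refine ⟨inferInstance, ?_⟩
  apply t2_quotient_of_isClosed_rel
  have hset : {z : (↥(Ellis φ) × B) × (↥(Ellis φ) × B) | s.r z.1 z.2}
      = {z : (↥(Ellis φ) × B) × (↥(Ellis φ) × B) |
          z.1.2 = z.2.2 ∧
            Set.EqOn (↑z.1.1 : K → K) (↑z.2.1 : K → K) (p ⁻¹' {z.1.2})} :=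
    Set.ext fun z => hs z.1 z.2
  rw [hset]
  exact hclosed
end

section
/- Let (K, B, p; φ) be a bundle of topological dynamical systems such that (K, φ) is equicontinuous and every fiber system (K_b, φ_b) is minimal. Then p is an open map. -/
/-- A topological dynamical system `(S, ψ)` is minimal if it has no nonempty proper closed
invariant subset. -/
def IsMinimalSystem {S : Type*} [TopologicalSpace S] (ψ : S → S) : Prop :=
  ∀ C : Set S, IsClosed C → Set.MapsTo ψ C C → C.Nonempty → C = Set.univ

lemma p_iterate {K B : Type*} (φ : K → K) (p : K → B) (hinv : ∀ x, p (φ x) = p x) :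
    ∀ (n : ℕ) (x : K), p (φ^[n] x) = p x := by
  intro n
  induction n with
  | zero => intro x; simp
  | succ n ih =>
    intro x
    rw [Function.iterate_succ_apply, ih, hinv]

/-- Let `(K, B, p; φ)` be a bundle of topological dynamical systems such
that `(K, φ)` is equicontinuous and every fiber system `(K_b, φ_b)` is minimal.  Then `p` is
an open map. -/
theorem bundle_projection_isOpenMap_of_minimal_fibers
    {K B : Type*} [UniformSpace K] [CompactSpace K] [T2Space K]
    [TopologicalSpace B] [CompactSpace B] [T2Space B]
    (φ : K → K) (hφ : Continuous φ)
    (p : K → B) (hp : Continuous p) (hpsurj : Function.Surjective p)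
    (hinv : ∀ x, p (φ x) = p x)
    (hequi : UniformEquicontinuous fun n : ℕ => φ^[n])
    (hmin : ∀ b : B, IsMinimalSystem (fiberMap φ p hinv b)) :
    IsOpenMap p := by
  intro O hO
  -- the set of points whose forward orbit avoids O
  set C : Set K := ⋂ n : ℕ, φ^[n] ⁻¹' Oᶜ with hC_def
  have hC_closed : IsClosed C :=
    isClosed_iInter fun n => (hO.isClosed_compl).preimage (hφ.iterate n)
  have hC_inv : ∀ x ∈ C, φ x ∈ C := by
    intro x hx
    simp only [hC_def, Set.mem_iInter, Set.mem_preimage] at hx ⊢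
    intro n
    rw [← Function.iterate_succ_apply]
    exact hx (n + 1)
  have key : p '' O = (p '' C)ᶜ := by
    ext b
    constructor
    · rintro ⟨x, hxO, rfl⟩ ⟨y, hyC, hyb⟩
      -- the fiber over p x intersected with C
      set D : Set ↥(p ⁻¹' {p x}) := {z | (z : K) ∈ C} with hD_def
      have hD_closed : IsClosed D := hC_closed.preimage continuous_subtype_val
      have hD_mapsTo : Set.MapsTo (fiberMap φ p hinv (p x)) D D := by
        intro z hz
        exact hC_inv _ hz
      have hD_ne : D.Nonempty := ⟨⟨y, by simp [hyb]⟩, hyC⟩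
      have := hmin (p x) D hD_closed hD_mapsTo hD_ne
      have hxC : x ∈ C := by
        have : (⟨x, by simp⟩ : ↥(p ⁻¹' {p x})) ∈ D := this ▸ Set.mem_univ _
        exact this
      have := Set.mem_iInter.mp hxC 0
      simp at this
      exact this hxO
    · intro hb
      obtain ⟨y, rfl⟩ := hpsurj b
      have hyC : y ∉ C := fun h => hb ⟨y, h, rfl⟩
      simp only [hC_def, Set.mem_iInter, Set.mem_preimage, Set.mem_compl_iff, not_forall,
        not_not] at hyC
      obtain ⟨n, hn⟩ := hyC
      exact ⟨φ^[n] y, hn, p_iterate φ p hinv n y⟩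
  rw [key]
  exact ((hC_closed.isCompact.image
    hp).isClosed).isOpen_compl
end

section
/- Let (K, φ) be a minimal topological dynamical system with discrete spectrum. Then for every x₀ ∈ K the evaluation map δ_{x₀} : E(K, φ) → K, ψ ↦ ψ(x₀), is a homeomorphism satisfying δ_{x₀}(id_K) = x₀ and δ_{x₀}(ψ ∘ φ) = φ(δ_{x₀}(ψ)) for all ψ ∈ E(K, φ); moreover it is the unique homeomorphism Θ : E(K, φ) → K with Θ(id_K) = x₀ and Θ(ψ ∘ φ) = φ(Θ(ψ)) for all ψ ∈ E(K, φ). In particular, (K, φ) is isomorphic to a minimal rotation on a compact abelian topological group. -/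
universe u

/-- A topological dynamical system has discrete spectrum if the linear span of the
eigenvectors of its Koopman operator with unimodular eigenvalues is dense in `C(K)`. -/
def DiscreteSpectrum {K : Type*} [TopologicalSpace K] (φ : K → K) : Prop :=
  Dense (↑(Submodule.span ℂ
    {f : C(K, ℂ) | f ≠ 0 ∧ ∃ lam : ℂ, ‖lam‖ = 1 ∧ ∀ x, f (φ x) = lam * f x}) :
      Set C(K, ℂ))

/-- An isomorphism of `(K, φ)` with a minimal rotation on a compact abelian topological
group. -/
structure GroupRotationIso (K : Type u) [TopologicalSpace K] (φ : K → K) where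
  G : Type u
  [tG : TopologicalSpace G]
  [gG : CommGroup G]
  [cG : CompactSpace G]
  [tgG : IsTopologicalGroup G]
  a : G
  e : K ≃ₜ G
  equivariant : ∀ x : K, e (φ x) = a * e x
  minimal : IsMinimalSystem fun g : G => a * g

section Aux

set_option linter.unusedSectionVars false

variable {K : Type u} [TopologicalSpace K] [CompactSpace K] [T2Space K] {φ : K → K}

theorem iterate_eig {f : C(K, ℂ)} {lam : ℂ} (heig : ∀ x, f (φ x) = lam * f x) :
    ∀ (n : ℕ) (x : K), f (φ^[n] x) = lam ^ n * f x := by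
  intro n
  induction n with
  | zero => simp
  | succ n ih =>
    intro x
    rw [Function.iterate_succ_apply', heig, ih, pow_succ]
    ring

theorem eig_norm_const (hφ : Continuous φ) (hmin : IsMinimalSystem φ)
    {f : C(K, ℂ)} {lam : ℂ} (hlam : ‖lam‖ = 1) (heig : ∀ x, f (φ x) = lam * f x)
    (y : K) : ∀ x, ‖f x‖ = ‖f y‖ := by
  have hC : {z : K | ‖f z‖ = ‖f y‖} = Set.univ := by
    refine hmin _ (isClosed_eq ((map_continuous f).norm) continuous_const) ?_ ⟨y, rfl⟩
    intro z hz
    simp only [Set.mem_setOf_eq] at *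
    rw [heig, norm_mul, hlam, one_mul, hz]
  exact fun x => Set.eq_univ_iff_forall.mp hC x

theorem eig_ne_zero (hφ : Continuous φ) (hmin : IsMinimalSystem φ)
    {f : C(K, ℂ)} {lam : ℂ} (hlam : ‖lam‖ = 1) (heig : ∀ x, f (φ x) = lam * f x)
    (hf0 : f ≠ 0) : ∀ x, f x ≠ 0 := by
  intro x hx
  apply hf0
  ext z
  have hz := eig_norm_const hφ hmin hlam heig x z
  rw [hx, norm_zero] at hz
  simpa using norm_eq_zero.mp hz

theorem ellis_eig_rel {ψ : K → K} (hψ : ψ ∈ Ellis φ)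
    {f : C(K, ℂ)} {lam : ℂ} (heig : ∀ x, f (φ x) = lam * f x) (y z : K) :
    f (ψ y) * f z = f (ψ z) * f y := by
  have hcl : IsClosed {χ : K → K | f (χ y) * f z = f (χ z) * f y} :=
    isClosed_eq (((map_continuous f).comp (continuous_apply y)).mul continuous_const)
      (((map_continuous f).comp (continuous_apply z)).mul continuous_const)
  have hsub : {χ : K → K | ∃ n, χ = φ^[n]} ⊆ {χ : K → K | f (χ y) * f z = f (χ z) * f y} := by
    rintro χ ⟨n, rfl⟩
    simp only [Set.mem_setOf_eq, iterate_eig heig n]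
    ring
  exact closure_minimal hsub hcl hψ

theorem eig_separating (hds : DiscreteSpectrum φ) {α β : K → K}
    (h : ∀ f ∈ {f : C(K, ℂ) | f ≠ 0 ∧ ∃ lam : ℂ, ‖lam‖ = 1 ∧ ∀ x, f (φ x) = lam * f x},
      ∀ y, f (α y) = f (β y)) : α = β := by
  have key : ∀ (g : C(K, ℂ)) (y : K), g (α y) = g (β y) := by
    intro g y
    let L : C(K, ℂ) →ₗ[ℂ] ℂ :=
      { toFun := fun f => f (α y) - f (β y)
        map_add' := by intros; simp; ring
        map_smul' := by intros; simp; ring }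
    have hLcont : Continuous L := (continuous_eval_const (α y)).sub
      (continuous_eval_const (β y))
    have h1 : (↑(Submodule.span ℂ
        {f : C(K, ℂ) | f ≠ 0 ∧ ∃ lam : ℂ, ‖lam‖ = 1 ∧ ∀ x, f (φ x) = lam * f x}) :
          Set C(K, ℂ)) ⊆ (LinearMap.ker L : Set C(K, ℂ)) := by
      refine Submodule.span_le.mpr ?_
      intro f hf
      simpa [L, LinearMap.mem_ker, sub_eq_zero] using h f hf y
    have h2 : IsClosed ((LinearMap.ker L : Submodule ℂ C(K, ℂ)) : Set C(K, ℂ)) := by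
      have : ((LinearMap.ker L : Submodule ℂ C(K, ℂ)) : Set C(K, ℂ)) = L ⁻¹' {0} := rfl
      rw [this]
      exact isClosed_singleton.preimage hLcont
    have hd : Dense (↑(Submodule.span ℂ
        {f : C(K, ℂ) | f ≠ 0 ∧ ∃ lam : ℂ, ‖lam‖ = 1 ∧ ∀ x, f (φ x) = lam * f x}) :
          Set C(K, ℂ)) := hds
    have h3 : (Set.univ : Set C(K, ℂ)) ⊆ (LinearMap.ker L : Set C(K, ℂ)) := by
      rw [← hd.closure_eq]
      exact h2.closure_subset_iff.mpr h1
    have : g ∈ (LinearMap.ker L : Set C(K, ℂ)) := h3 (Set.mem_univ g)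
    simpa [L, LinearMap.mem_ker, sub_eq_zero] using this
  funext y
  by_contra hne
  obtain ⟨g, hg0, hg1, -⟩ := exists_continuous_zero_one_of_isClosed
    (isClosed_singleton (x := α y)) (isClosed_singleton (x := β y))
    (Set.disjoint_singleton.mpr hne)
  have := key (ContinuousMap.comp ⟨Complex.ofReal, Complex.continuous_ofReal⟩ g) y
  simp only [ContinuousMap.comp_apply, ContinuousMap.coe_mk] at this
  rw [hg0 rfl, hg1 rfl] at this
  simp at this

theorem ellis_eval_injective (hφ : Continuous φ) (hmin : IsMinimalSystem φ)
    (hds : DiscreteSpectrum φ) (z : K) {ψ χ : K → K}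
    (hψ : ψ ∈ Ellis φ) (hχ : χ ∈ Ellis φ) (hzz : ψ z = χ z) : ψ = χ := by
  apply eig_separating hds
  rintro f ⟨hf0, lam, hlam, heig⟩ y
  have hz : f z ≠ 0 := eig_ne_zero hφ hmin hlam heig hf0 z
  have h1 := ellis_eig_rel hψ heig y z
  have h2 := ellis_eig_rel hχ heig y z
  rw [hzz] at h1
  exact mul_right_cancel₀ hz (h1.trans h2.symm) |>.symm ▸ rfl

theorem id_mem_ellis : (id : K → K) ∈ Ellis φ :=
  subset_closure ⟨0, (Function.iterate_zero φ).symm⟩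

theorem phi_mem_ellis : φ ∈ Ellis φ :=
  subset_closure ⟨1, (Function.iterate_one φ).symm⟩

theorem phi_comp_mem_ellis (hφ : Continuous φ) {ψ : K → K} (hψ : ψ ∈ Ellis φ) :
    φ ∘ ψ ∈ Ellis φ := by
  have hc : Continuous fun χ : K → K => φ ∘ χ :=
    continuous_pi fun y => hφ.comp (continuous_apply y)
  have hmap : Set.MapsTo (fun χ : K → K => φ ∘ χ) {χ : K → K | ∃ n, χ = φ^[n]}
      (Ellis φ) := by
    rintro χ ⟨n, rfl⟩
    exact subset_closure ⟨n + 1, (Function.iterate_succ' φ n).symm⟩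
  have h2 := hmap.closure hc
  rw [show closure (Ellis φ) = Ellis φ from closure_closure] at h2
  exact h2 hψ

theorem iterate_comp_mem_ellis (hφ : Continuous φ) {ψ : K → K} (hψ : ψ ∈ Ellis φ) :
    ∀ n : ℕ, φ^[n] ∘ ψ ∈ Ellis φ := by
  intro n
  induction n with
  | zero => simpa using hψ
  | succ n ih =>
    have := phi_comp_mem_ellis hφ ih
    rw [Function.iterate_succ']
    simpa [Function.comp_assoc] using this

theorem comp_mem_ellis (hφ : Continuous φ) {ψ χ : K → K} (hψ : ψ ∈ Ellis φ)
    (hχ : χ ∈ Ellis φ) : ψ ∘ χ ∈ Ellis φ := by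
  have hc : Continuous fun α : K → K => α ∘ χ :=
    continuous_pi fun y => continuous_apply (χ y)
  have hmap : Set.MapsTo (fun α : K → K => α ∘ χ) {α : K → K | ∃ n, α = φ^[n]}
      (Ellis φ) := by
    rintro α ⟨n, rfl⟩
    exact iterate_comp_mem_ellis hφ hχ n
  have h2 := hmap.closure hc
  rw [show closure (Ellis φ) = Ellis φ from closure_closure] at h2
  exact h2 hψ

theorem ellis_eval_surjective (hφ : Continuous φ) (hmin : IsMinimalSystem φ)
    (z x : K) : ∃ ψ ∈ Ellis φ, ψ z = x := by
  have hcpt : IsCompact (Ellis φ) := (isClosed_closure).isCompact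
  set D := (fun ψ : K → K => ψ z) '' Ellis φ with hD
  have hDc : IsClosed D := (hcpt.image (continuous_apply z)).isClosed
  have hDne : D.Nonempty := ⟨z, id, id_mem_ellis, rfl⟩
  have hmap : Set.MapsTo φ D D := by
    rintro x ⟨ψ, hψ, rfl⟩
    exact ⟨φ ∘ ψ, phi_comp_mem_ellis hφ hψ, rfl⟩
  have huniv := hmin D hDc hmap hDne
  have hx : x ∈ D := huniv ▸ Set.mem_univ x
  obtain ⟨ψ, hψ, hval⟩ := hx
  exact ⟨ψ, hψ, hval⟩

theorem ellis_comm (hφ : Continuous φ) (hmin : IsMinimalSystem φ)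
    (hds : DiscreteSpectrum φ) (x₀ : K) {ψ χ : K → K}
    (hψ : ψ ∈ Ellis φ) (hχ : χ ∈ Ellis φ) : ψ ∘ χ = χ ∘ ψ := by
  apply eig_separating hds
  rintro f ⟨hf0, lam, hlam, heig⟩ y
  have hx : f x₀ ≠ 0 := eig_ne_zero hφ hmin hlam heig hf0 x₀
  have h1 := ellis_eig_rel hψ heig (χ y) x₀
  have h2 := ellis_eig_rel hχ heig y x₀
  have h3 := ellis_eig_rel hχ heig (ψ y) x₀
  have h4 := ellis_eig_rel hψ heig y x₀
  simp only [Function.comp_apply]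
  have key : f (ψ (χ y)) * (f x₀ * f x₀) = f (χ (ψ y)) * (f x₀ * f x₀) := by
    linear_combination f x₀ * h1 + f (ψ x₀) * h2 - f x₀ * h3 - f (χ x₀) * h4
  exact mul_right_cancel₀ (mul_ne_zero hx hx) key

theorem ellis_inv (hφ : Continuous φ) (hmin : IsMinimalSystem φ)
    (hds : DiscreteSpectrum φ) (x₀ : K) {ψ : K → K} (hψ : ψ ∈ Ellis φ) :
    ∃ χ ∈ Ellis φ, χ ∘ ψ = id ∧ ψ ∘ χ = id := by
  obtain ⟨χ, hχ, hval⟩ := ellis_eval_surjective hφ hmin (ψ x₀) x₀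
  have h1 : χ ∘ ψ = id :=
    ellis_eval_injective hφ hmin hds x₀ (comp_mem_ellis hφ hχ hψ) id_mem_ellis
      (by simp [hval])
  refine ⟨χ, hχ, h1, ?_⟩
  rw [ellis_comm hφ hmin hds x₀ hψ hχ]
  exact h1

theorem ellis_c_mul (hφ : Continuous φ) (hmin : IsMinimalSystem φ) (x₀ : K)
    {ψ χ : K → K} (hψ : ψ ∈ Ellis φ)
    {f : C(K, ℂ)} {lam : ℂ} (hlam : ‖lam‖ = 1) (heig : ∀ x, f (φ x) = lam * f x)
    (hf0 : f ≠ 0) :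
    f (ψ (χ x₀)) / f x₀ = (f (ψ x₀) / f x₀) * (f (χ x₀) / f x₀) := by
  have hx : f x₀ ≠ 0 := eig_ne_zero hφ hmin hlam heig hf0 x₀
  have h1 := ellis_eig_rel hψ heig (χ x₀) x₀
  field_simp
  linear_combination h1

end Aux

/-- Let `(K, φ)` be a minimal topological dynamical system with discrete
spectrum and `x₀ ∈ K`.  Then the evaluation map `δ_{x₀} : E(K, φ) → K`, `ψ ↦ ψ x₀`, is a
homeomorphism with `δ_{x₀}(id) = x₀` and `δ_{x₀}(ψ ∘ φ) = φ(δ_{x₀} ψ)`, and it is the unique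
homeomorphism `Θ : E(K, φ) → K` with these two properties.  In particular `(K, φ)` is
isomorphic to a minimal rotation on a compact abelian topological group. -/
theorem evaluation_homeomorphism_of_minimal_discreteSpectrum
    {K : Type u} [TopologicalSpace K] [CompactSpace K] [T2Space K]
    (φ : K → K) (hφ : Continuous φ)
    (hmin : IsMinimalSystem φ) (hds : DiscreteSpectrum φ) (x₀ : K) :
    (∃ h : ↥(Ellis φ) ≃ₜ K,
      (∀ ψ : ↥(Ellis φ), h ψ = (↑ψ : K → K) x₀) ∧
      (∀ ψ : ↥(Ellis φ), (↑ψ : K → K) = id → h ψ = x₀) ∧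
      (∀ ψ ψ' : ↥(Ellis φ), (↑ψ' : K → K) = (↑ψ : K → K) ∘ φ → h ψ' = φ (h ψ)) ∧
      (∀ Θ : ↥(Ellis φ) ≃ₜ K,
        (∀ ψ : ↥(Ellis φ), (↑ψ : K → K) = id → Θ ψ = x₀) →
        (∀ ψ ψ' : ↥(Ellis φ), (↑ψ' : K → K) = (↑ψ : K → K) ∘ φ → Θ ψ' = φ (Θ ψ)) →
        Θ = h)) ∧
    Nonempty (GroupRotationIso K φ) := by
  classical
  haveI hcs : CompactSpace ↥(Ellis φ) :=
    isCompact_iff_compactSpace.mp (isClosed_closure).isCompact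
  -- the evaluation map
  set ev : ↥(Ellis φ) → K := fun ψ => (↑ψ : K → K) x₀ with hev
  have hevc : Continuous ev := (continuous_apply x₀).comp continuous_subtype_val
  have hevinj : Function.Injective ev := fun ψ χ hh =>
    Subtype.ext (ellis_eval_injective hφ hmin hds x₀ ψ.2 χ.2 hh)
  have hevsurj : Function.Surjective ev := by
    intro x
    obtain ⟨ψ, hψ, hx⟩ := ellis_eval_surjective hφ hmin x₀ x
    exact ⟨⟨ψ, hψ⟩, hx⟩
  let E : ↥(Ellis φ) ≃ K := Equiv.ofBijective ev ⟨hevinj, hevsurj⟩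
  let h : ↥(Ellis φ) ≃ₜ K := Continuous.homeoOfEquivCompactToT2 (f := E) hevc
  have hcoe : ∀ ψ : ↥(Ellis φ), h ψ = (↑ψ : K → K) x₀ := fun ψ => rfl
  constructor
  · refine ⟨h, hcoe, ?_, ?_, ?_⟩
    · intro ψ hid
      rw [hcoe, hid]
      rfl
    · intro ψ ψ' hcomp
      rw [hcoe, hcoe, hcomp]
      have := ellis_comm hφ hmin hds x₀ ψ.2 (phi_mem_ellis (φ := φ))
      calc ((↑ψ : K → K) ∘ φ) x₀ = ((↑ψ : K → K) ∘ φ) x₀ := rfl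
        _ = (φ ∘ (↑ψ : K → K)) x₀ := by rw [this]
        _ = φ ((↑ψ : K → K) x₀) := rfl
    · -- uniqueness
      intro Θ hΘ1 hΘ2
      have hiter : ∀ (n : ℕ) (hn : φ^[n] ∈ Ellis φ), Θ ⟨φ^[n], hn⟩ = φ^[n] x₀ := by
        intro n
        induction n with
        | zero =>
          intro hn
          simpa using hΘ1 ⟨φ^[0], hn⟩ (Function.iterate_zero φ)
        | succ n ih =>
          intro hn
          have hmem : φ^[n] ∈ Ellis φ := subset_closure ⟨n, rfl⟩
          have hstep := hΘ2 ⟨φ^[n], hmem⟩ ⟨φ^[n + 1], hn⟩ (Function.iterate_succ φ n)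
          rw [hstep, ih hmem]
          exact (Function.iterate_succ_apply' φ n x₀).symm
      have hdense : Dense {ψ : ↥(Ellis φ) | ∃ n : ℕ, (↑ψ : K → K) = φ^[n]} := by
        intro ψ
        rw [closure_subtype]
        have himg : (Subtype.val '' {ψ : ↥(Ellis φ) | ∃ n : ℕ, (↑ψ : K → K) = φ^[n]}) =
            {χ : K → K | ∃ n, χ = φ^[n]} := by
          ext χ
          constructor
          · rintro ⟨ψ, hψ, rfl⟩
            exact hψ
          · rintro ⟨n, rfl⟩
            exact ⟨⟨φ^[n], subset_closure ⟨n, rfl⟩⟩, ⟨n, rfl⟩, rfl⟩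
        rw [himg]
        exact ψ.2
      have heq : (Θ : ↥(Ellis φ) → K) = (h : ↥(Ellis φ) → K) := by
        refine Continuous.ext_on hdense Θ.continuous h.continuous ?_
        rintro ψ ⟨n, hn⟩
        have hψeq : ψ = ⟨φ^[n], hn ▸ ψ.2⟩ := Subtype.ext hn
        rw [hψeq, hiter n, hcoe]
      ext ψ
      exact congrFun heq ψ
  · -- group rotation isomorphism
    have hid_mem : (id : K → K) ∈ Ellis φ := id_mem_ellis
    letI : CommGroup ↥(Ellis φ) :=
      { mul := fun ψ χ => ⟨(↑ψ : K → K) ∘ (↑χ : K → K), comp_mem_ellis hφ ψ.2 χ.2⟩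
        one := ⟨id, hid_mem⟩
        inv := fun ψ => ⟨Classical.choose (ellis_inv hφ hmin hds x₀ ψ.2),
          (Classical.choose_spec (ellis_inv hφ hmin hds x₀ ψ.2)).1⟩
        mul_assoc := fun a b c => Subtype.ext rfl
        one_mul := fun a => Subtype.ext rfl
        mul_one := fun a => Subtype.ext rfl
        inv_mul_cancel := fun a => Subtype.ext
          (Classical.choose_spec (ellis_inv hφ hmin hds x₀ a.2)).2.1
        mul_comm := fun a b => Subtype.ext (ellis_comm hφ hmin hds x₀ a.2 b.2) }
    -- embedding into a product via eigenvalues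
    set Eig : Set C(K, ℂ) :=
      {f : C(K, ℂ) | f ≠ 0 ∧ ∃ lam : ℂ, ‖lam‖ = 1 ∧ ∀ x, f (φ x) = lam * f x} with hEig
    let Φ : ↥(Ellis φ) → (↥Eig → ℂ) := fun ψ f => (f : C(K, ℂ)) ((↑ψ : K → K) x₀) / (f : C(K, ℂ)) x₀
    have hΦc : Continuous Φ := continuous_pi fun f =>
      Continuous.div_const
        ((map_continuous (f : C(K, ℂ))).comp ((continuous_apply x₀).comp continuous_subtype_val)) _
    have hΦmul : ∀ ψ χ : ↥(Ellis φ), Φ (ψ * χ) = Φ ψ * Φ χ := by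
      intro ψ χ
      funext f
      obtain ⟨hf0, lam, hlam, heig⟩ := f.2
      exact ellis_c_mul hφ hmin x₀ ψ.2 hlam heig hf0
    have hΦone : Φ 1 = 1 := by
      funext f
      obtain ⟨hf0, lam, hlam, heig⟩ := f.2
      have hx : (f : C(K, ℂ)) x₀ ≠ 0 := eig_ne_zero hφ hmin hlam heig hf0 x₀
      exact div_self hx
    have hΦnorm : ∀ (ψ : ↥(Ellis φ)) (f : ↥Eig), ‖Φ ψ f‖ = 1 := by
      intro ψ f
      obtain ⟨hf0, lam, hlam, heig⟩ := f.2
      have hx : (f : C(K, ℂ)) x₀ ≠ 0 := eig_ne_zero hφ hmin hlam heig hf0 x₀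
      have hnc := eig_norm_const hφ hmin hlam heig x₀ ((↑ψ : K → K) x₀)
      simp only [Φ, norm_div, hnc]
      exact div_self (by simpa using hx)
    have hΦinj : Function.Injective Φ := by
      intro ψ χ hpc
      apply hevinj
      have hptwise : (fun _ : K => (↑ψ : K → K) x₀) = fun _ : K => (↑χ : K → K) x₀ := by
        apply eig_separating hds
        rintro f hf y
        have hf' := hf
        obtain ⟨hf0, lam, hlam, heig⟩ := hf'
        have hx : f x₀ ≠ 0 := eig_ne_zero hφ hmin hlam heig hf0 x₀
        have hdiv := congrFun hpc ⟨f, hf⟩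
        simp only [Φ] at hdiv
        have := (div_eq_div_iff hx hx).mp hdiv
        exact mul_right_cancel₀ hx this
      exact congrFun hptwise x₀
    have hΦemb := hΦc.isClosedEmbedding hΦinj
    have hΦinv : ∀ ψ : ↥(Ellis φ), Φ ψ⁻¹ = star (Φ ψ) := by
      intro ψ
      funext f
      have hmul : Φ ψ⁻¹ f * Φ ψ f = 1 := by
        have hcf := congrFun (hΦmul ψ⁻¹ ψ) f
        rw [inv_mul_cancel, hΦone] at hcf
        simpa using hcf.symm
      have hn := hΦnorm ψ f
      have hzs : Φ ψ f * star (Φ ψ f) = 1 := by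
        have hsq : Complex.normSq (Φ ψ f) = 1 := by
          rw [Complex.normSq_eq_norm_sq, hn]
          norm_num
        rw [Complex.star_def, Complex.mul_conj, hsq]
        norm_num
      calc Φ ψ⁻¹ f = Φ ψ⁻¹ f * (Φ ψ f * star (Φ ψ f)) := by rw [hzs, mul_one]
        _ = (Φ ψ⁻¹ f * Φ ψ f) * star (Φ ψ f) := by ring
        _ = 1 * star (Φ ψ f) := by rw [hmul]
        _ = star (Φ ψ f) := one_mul _
    haveI htg : IsTopologicalGroup ↥(Ellis φ) :=
      { continuous_mul := by
          rw [hΦemb.isEmbedding.continuous_iff]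
          have : Φ ∘ (fun p : ↥(Ellis φ) × ↥(Ellis φ) => p.1 * p.2) =
              fun p : ↥(Ellis φ) × ↥(Ellis φ) => Φ p.1 * Φ p.2 := by
            funext p
            exact hΦmul p.1 p.2
          rw [this]
          exact (hΦc.comp continuous_fst).mul (hΦc.comp continuous_snd)
        continuous_inv := by
          rw [hΦemb.isEmbedding.continuous_iff]
          have : Φ ∘ (fun ψ : ↥(Ellis φ) => ψ⁻¹) = fun ψ => star (Φ ψ) := by
            funext ψ
            exact hΦinv ψ
          rw [this]
          exact hΦc.star }
    refine ⟨{ G := ↥(Ellis φ)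
              a := ⟨φ, phi_mem_ellis⟩
              e := h.symm
              equivariant := ?_
              minimal := ?_ }⟩
    · intro x
      apply h.injective
      have hval : h ((⟨φ, phi_mem_ellis⟩ : ↥(Ellis φ)) * h.symm x) = φ (h (h.symm x)) := rfl
      rw [Homeomorph.apply_symm_apply, hval, Homeomorph.apply_symm_apply]
    · intro C hC hmap hne
      set D := (fun ψ : ↥(Ellis φ) => (↑ψ : K → K) x₀) '' C with hD
      have hDcl : IsClosed D := (hC.isCompact.image hevc).isClosed
      have hDmap : Set.MapsTo φ D D := by
        rintro x ⟨ψ, hψC, rfl⟩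
        exact ⟨(⟨φ, phi_mem_ellis⟩ : ↥(Ellis φ)) * ψ, hmap hψC, rfl⟩
      have hDne : D.Nonempty := hne.image _
      have hDuniv := hmin D hDcl hDmap hDne
      rw [Set.eq_univ_iff_forall]
      intro ψ
      have : (↑ψ : K → K) x₀ ∈ D := hDuniv ▸ Set.mem_univ _
      obtain ⟨χ, hχC, hval⟩ := this
      have : χ = ψ := hevinj hval
      rwa [← this]
end

section
/- Let (K, φ) be a topological dynamical system with discrete spectrum. Then the evaluation map ev : E(K, φ) × K → K, (ψ, x) ↦ ψ(x), is jointly continuous and surjective, and satisfies ev(φ ∘ ψ, x) = φ(ev(ψ, x)) for all ψ ∈ E(K, φ) and x ∈ K. In other words, (K, φ) is a factor of the product of the group rotation (E(K, φ), ψ ↦ φ ∘ ψ) with the trivial system (K, id_K). -/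
/-- Let `(K, φ)` be a topological dynamical system with discrete spectrum.
Then the evaluation map `ev : E(K, φ) × K → K`, `(ψ, x) ↦ ψ x`, is jointly continuous and
surjective and intertwines the rotation `ψ ↦ φ ∘ ψ` on `E(K, φ)` (which maps `E(K, φ)` to
itself) with `φ`; i.e. `(K, φ)` is a factor of the product of the group rotation
`(E(K, φ), ψ ↦ φ ∘ ψ)` with the trivial system `(K, id)`. -/
theorem factor_of_ellis_rotation_times_trivial
    {K : Type*} [TopologicalSpace K] [CompactSpace K] [T2Space K]
    (φ : K → K) (hφ : Continuous φ) (hds : DiscreteSpectrum φ) :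
    (∀ ψ ∈ Ellis φ, φ ∘ ψ ∈ Ellis φ) ∧
    Continuous (fun z : ↥(Ellis φ) × K => (↑z.1 : K → K) z.2) ∧
    Function.Surjective (fun z : ↥(Ellis φ) × K => (↑z.1 : K → K) z.2) ∧
    (∀ (ψ ψ' : ↥(Ellis φ)) (x : K), (↑ψ' : K → K) = φ ∘ (↑ψ : K → K) →
      (↑ψ' : K → K) x = φ ((↑ψ : K → K) x)) := by
  have hid : (id : K → K) ∈ Ellis φ := subset_closure ⟨0, rfl⟩
  -- Step 1: for every continuous function `f`, `(ψ, x) ↦ f (ψ x)` is continuous.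
  have key : ∀ f : C(K, ℂ),
      Continuous fun z : ↥(Ellis φ) × K => f ((z.1 : K → K) z.2) := by
    set S := {f : C(K, ℂ) | f ≠ 0 ∧ ∃ lam : ℂ, ‖lam‖ = 1 ∧ ∀ x, f (φ x) = lam * f x} with hS
    let M : Submodule ℂ C(K, ℂ) :=
      { carrier := {f | Continuous fun z : ↥(Ellis φ) × K => f ((z.1 : K → K) z.2)}
        add_mem' := fun hf hg => by exact hf.add hg
        zero_mem' := by simpa using continuous_const
        smul_mem' := fun c f hf => by exact (continuous_const.mul hf : _) }
    have hSM : S ⊆ (M : Set C(K, ℂ)) := by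
      rintro f ⟨hf0, lam, -, hlam⟩
      obtain ⟨x₀, hx₀⟩ : ∃ x₀, f x₀ ≠ 0 := by
        by_contra h
        push_neg at h
        exact hf0 (ContinuousMap.ext fun x => by simpa using h x)
      have hiter : ∀ n x, f (φ^[n] x) = lam ^ n * f x := by
        intro n
        induction n with
        | zero => simp
        | succ n ih =>
          intro x
          rw [Function.iterate_succ_apply', hlam, ih, pow_succ]
          ring
      have hC : ∀ ψ ∈ Ellis φ, ∀ x, f (ψ x) * f x₀ = f (ψ x₀) * f x := by
        have hclosed : IsClosed {ψ : K → K | ∀ x, f (ψ x) * f x₀ = f (ψ x₀) * f x} := by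
          rw [Set.setOf_forall]
          refine isClosed_iInter fun x => isClosed_eq ?_ ?_
          · exact ((map_continuous f).comp (continuous_apply x)).mul continuous_const
          · exact ((map_continuous f).comp (continuous_apply x₀)).mul
              ((map_continuous f).comp continuous_const)
        refine fun ψ hψ => closure_minimal ?_ hclosed hψ
        rintro χ ⟨n, rfl⟩ x
        rw [hiter n x, hiter n x₀]
        ring
      have heq : ∀ z : ↥(Ellis φ) × K,
          f ((z.1 : K → K) z.2) = f ((z.1 : K → K) x₀) * f z.2 / f x₀ := by
        intro z
        rw [eq_div_iff hx₀]
        exact hC _ z.1.2 z.2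
      have c1 : Continuous fun z : ↥(Ellis φ) × K => f ((z.1 : K → K) x₀) :=
        (map_continuous f).comp ((continuous_apply x₀).comp
          (continuous_subtype_val.comp continuous_fst))
      have c2 : Continuous fun z : ↥(Ellis φ) × K => f z.2 :=
        (map_continuous f).comp continuous_snd
      exact (((c1.mul c2).div_const _).congr fun z => (heq z).symm : _)
    have hspan : (↑(Submodule.span ℂ S) : Set C(K, ℂ)) ⊆ (M : Set C(K, ℂ)) :=
      Submodule.span_le.2 hSM
    intro f
    obtain ⟨u, hu, hlim⟩ := mem_closure_iff_seq_limit.mp (hds f)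
    have htu : TendstoUniformly (fun n (z : ↥(Ellis φ) × K) => u n ((z.1 : K → K) z.2))
        (fun z => f ((z.1 : K → K) z.2)) Filter.atTop := by
      rw [Metric.tendstoUniformly_iff]
      intro ε hε
      have h2 : ∀ᶠ n in Filter.atTop, dist (u n) f < ε :=
        Metric.tendsto_nhds.mp hlim ε hε
      filter_upwards [h2] with n hn z
      exact (ContinuousMap.dist_apply_le_dist _).trans_lt (by rwa [dist_comm])
    exact htu.continuous (Filter.Frequently.of_forall fun n => hspan (hu n))
  -- Step 2: embed K into a product of copies of ℂ.
  have hsep : ∀ x y : K, x ≠ y → ∃ f : C(K, ℂ), f x ≠ f y := by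
    intro x y hxy
    obtain ⟨f, hf0, hf1, -⟩ := exists_continuous_zero_one_of_isClosed
      (isClosed_singleton (x := x)) (isClosed_singleton (x := y))
      (by simpa [Set.disjoint_singleton] using hxy)
    refine ⟨⟨fun p => (f p : ℂ), Complex.continuous_ofReal.comp f.continuous⟩, ?_⟩
    simp [hf0 rfl, hf1 rfl]
  let e : K → (C(K, ℂ) → ℂ) := fun x g => g x
  have hec : Continuous e := continuous_pi fun g => map_continuous g
  have hei : Function.Injective e := by
    intro x y h
    by_contra hxy
    obtain ⟨g, hg⟩ := hsep x y hxy
    exact hg (congrFun h g)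
  have hemb := hec.isClosedEmbedding hei
  refine ⟨?_, ?_, ?_, ?_⟩
  · intro ψ hψ
    have hg : Continuous (fun χ : K → K => φ ∘ χ) :=
      continuous_pi fun x => hφ.comp (continuous_apply x)
    refine map_mem_closure hg hψ ?_
    rintro χ ⟨n, rfl⟩
    exact ⟨n + 1, (Function.iterate_succ' φ n).symm⟩
  · rw [hemb.isInducing.continuous_iff]
    exact continuous_pi fun g => key g
  · exact fun x => ⟨(⟨id, hid⟩, x), rfl⟩
  · intro ψ ψ' x h
    rw [h]
    rfl
end
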